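/- arXiv:1106.2647 — 2 statements merged into one kernel-verified Lean document; each statement's English description precedes it below -/
import Mathlib

section
/- The axiom system AXun(S) is complete for the language Lprop(S) with respect to the class Tun(S): every formula of Lprop(S) that is valid with respect to Tun(S) is provable in AXun(S). -/
/-! ## Signatures -/

structure Signature where
  exo : Type
  endo : Type
  exoFin : Fintype exo
  endoFin : Fintype endo
  endoDec : DecidableEq endo
  exoRange : exo → Type
  range : endo → Type
  exoRangeFin : ∀ u, Fintype (exoRange u)
  rangeFin : ∀ X, Fintype (range X)
  exoRangeNe : ∀ u, Nonempty (exoRange u)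
  rangeNe : ∀ X, Nonempty (range X)

attribute [instance] Signature.exoFin Signature.endoFin Signature.endoDec
  Signature.exoRangeFin Signature.rangeFin Signature.exoRangeNe Signature.rangeNe

/-- A context: an assignment of values to the exogenous variables. -/
abbrev Signature.Ctx (S : Signature) : Type := ∀ u : S.exo, S.exoRange u

/-- An assignment of values to the endogenous variables. -/
abbrev Signature.Asgn (S : Signature) : Type := ∀ X : S.endo, S.range X

/-- An intervention `Y⃗ ← y⃗`: a partial assignment of values to (distinct)
endogenous variables. -/
abbrev Signature.Intervention (S : Signature) : Type := ∀ X : S.endo, Option (S.range X)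

/-- The primitive propositions Φ_S : propositions `X = x` for `X ∈ V`, `x ∈ R(X)`. -/
abbrev Signature.Atom (S : Signature) : Type := Σ X : S.endo, S.range X

/-! ## Counterfactual structures -/

/-- A counterfactual structure over the primitive propositions `Φ`:
a finite set of worlds, a valuation, and a ternary relation `R`,
where `R w u v` means `u ⪯_w v`. -/
structure CStruct (Φ : Type) where
  World : Type
  worldFin : Fintype World
  val : World → Φ → Prop
  R : World → World → World → Prop
  self_mem : ∀ w, ∃ v, R w w v
  refl_on : ∀ w u, (∃ v, R w u v) → R w u u
  trans_on : ∀ w u v x, (∃ y, R w u y) → (∃ y, R w v y) → (∃ y, R w x y) →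
    R w u v → R w v x → R w u x
  centered : ∀ w u, u ≠ w → (R w w u ∧ ¬ R w u w)

attribute [instance] CStruct.worldFin

namespace CStruct

variable {Φ : Type} (M : CStruct Φ)

/-- `u ∈ W_w` : `u ⪯_w v` for some `v`. -/
def inW (w u : M.World) : Prop := ∃ v, M.R w u v

/-- `u ≺_w v` : `u ⪯_w v` and not `v ⪯_w u`. -/
def lt (w u v : M.World) : Prop := M.R w u v ∧ ¬ M.R w v u

/-- The set of worlds in `W_w` satisfying `A` that are closest to `w`. -/
def closest (w : M.World) (A : M.World → Prop) : Set M.World :=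
  {v | M.inW w v ∧ A v ∧ ∀ v', A v' → ¬ M.lt w v' v}

/-- `(M,w) ⊨ A > B` : every closest world to `w` satisfying `A` satisfies `B`. -/
def cfSat (w : M.World) (A B : M.World → Prop) : Prop :=
  ∀ v ∈ M.closest w A, B v

/-- Membership in `M⁺`: each `≺_w` is a strict total order on `W_w`. -/
def totalOrd : Prop :=
  ∀ w u v, M.inW w u → M.inW w v → u ≠ v → M.lt w u v ∨ M.lt w v u

end CStruct

/-! ## Acceptable and full structures over Φ_S -/

/-- At every world, for each variable `X` exactly one proposition `X = x` is true. -/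
def Acceptable (S : Signature) (M : CStruct S.Atom) : Prop :=
  ∀ (w : M.World) (X : S.endo), ∃! x : S.range X, M.val w ⟨X, x⟩

/-- Every assignment of values to the endogenous variables is realized at some
world of `W_w`, for every world `w`. -/
def Full (S : Signature) (M : CStruct S.Atom) : Prop :=
  ∀ (w : M.World) (a : S.Asgn), ∃ v, M.inW w v ∧ ∀ X : S.endo, M.val v ⟨X, a X⟩

/-- The antecedent `Y⃗ = y⃗` (a conjunction of atoms) of the counterfactual
corresponding to the intervention `g`, as a predicate on worlds. -/
def intAnte (S : Signature) (M : CStruct S.Atom) (g : S.Intervention) :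
    M.World → Prop :=
  fun v => ∀ (Y : S.endo) (y : S.range Y), g Y = some y → M.val v ⟨Y, y⟩

/-- `(M,w) ⊨ [Y⃗ ← y⃗](X = x)`, read as the counterfactual
`(Y₁ = y₁ ∧ ... ∧ Y_k = y_k) > (X = x)`. -/
def satBasic (S : Signature) (M : CStruct S.Atom) (w : M.World)
    (g : S.Intervention) (X : S.endo) (x : S.range X) : Prop :=
  M.cfSat w (intAnte S M g) (fun v => M.val v ⟨X, x⟩)

/-- Recursive counterfactual structures `Mrec(Φ_S)`: full acceptable structures in
`M⁺` such that for each world there is a strict total order `≺` on the endogenous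
variables such that if `W' ≺ Y` then setting `Y` (in addition to `X⃗`) does not
change the value of `W'` at the closest world. -/
def MRec (S : Signature) (M : CStruct S.Atom) : Prop :=
  Acceptable S M ∧ Full S M ∧ M.totalOrd ∧
  ∀ w : M.World, ∃ vlt : S.endo → S.endo → Prop, IsStrictTotalOrder S.endo vlt ∧
    ∀ W' Y : S.endo, vlt W' Y →
      ∀ g : S.Intervention, g W' = none → g Y = none →
        ∀ (y : S.range Y) (w' : S.range W'),
          (satBasic S M w (Function.update g Y (some y)) W' w' ↔ satBasic S M w g W' w')

/-! ## Causal models -/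

/-- A causal model over `S`: for each endogenous variable `X`, a structural
equation `F_X` mapping the values of all the other variables to a value of `X`. -/
structure CausalModel (S : Signature) where
  F : ∀ X : S.endo, S.Ctx → (∀ Y : {Y : S.endo // Y ≠ X}, S.range Y.1) → S.range X

namespace CausalModel

variable {S : Signature}

/-- `a` is a solution of the equations of `T_{g}` in context `u`. -/
def isSolution (T : CausalModel S) (g : S.Intervention) (u : S.Ctx) (a : S.Asgn) : Prop :=
  ∀ X : S.endo,
    (∀ x : S.range X, g X = some x → a X = x) ∧
    (g X = none → a X = T.F X u (fun Y => a Y.1))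

/-- `T` is recursive (acyclic): membership in `Trec(S)`. -/
def Recursive (T : CausalModel S) : Prop :=
  ∃ vlt : S.endo → S.endo → Prop, IsStrictTotalOrder S.endo vlt ∧
    ∀ X Y : S.endo, vlt X Y →
      ∀ (u : S.Ctx) (a a' : ∀ Z : {Z : S.endo // Z ≠ X}, S.range Z.1),
        (∀ Z : {Z : S.endo // Z ≠ X}, Z.1 ≠ Y → a Z = a' Z) →
        T.F X u a = T.F X u a'

/-- Membership in `Tun(S)`: all the equations of every `T_{X⃗ ← x⃗}` have a
unique solution in every context. -/
def UniqueSolutions (T : CausalModel S) : Prop :=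
  ∀ (g : S.Intervention) (u : S.Ctx), ∃! a : S.Asgn, T.isSolution g u a

end CausalModel

/-! ## The language Lprop(S) -/

/-- `Lprop(S)`: Boolean combinations of basic formulas `[Y⃗ ← y⃗](X = x)`. -/
inductive LProp (S : Signature) : Type
  | basic (g : S.Intervention) (X : S.endo) (x : S.range X) : LProp S
  | neg : LProp S → LProp S
  | and : LProp S → LProp S → LProp S

/-- Satisfaction of `Lprop(S)` formulas in a causal model, relative to a context. -/
def CausalModel.sat {S : Signature} (T : CausalModel S) (u : S.Ctx) : LProp S → Prop
  | .basic g X x => ∀ a : S.Asgn, T.isSolution g u a → a X = x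
  | .neg φ => ¬ CausalModel.sat T u φ
  | .and φ ψ => CausalModel.sat T u φ ∧ CausalModel.sat T u ψ

/-- Satisfaction of `Lprop(S)` formulas in a counterfactual structure over `Φ_S`. -/
def satL {S : Signature} (M : CStruct S.Atom) (w : M.World) : LProp S → Prop
  | .basic g X x => satBasic S M w g X x
  | .neg φ => ¬ satL M w φ
  | .and φ ψ => satL M w φ ∧ satL M w ψ

namespace LProp

variable {S : Signature}

def imp (φ ψ : LProp S) : LProp S := .neg (.and φ (.neg ψ))

def or (φ ψ : LProp S) : LProp S := .neg (.and (.neg φ) (.neg ψ))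

/-- Boolean evaluation of a formula treating the basic formulas as atoms. -/
def evalB (v : LProp S → Prop) : LProp S → Prop
  | .neg φ => ¬ evalB v φ
  | .and φ ψ => evalB v φ ∧ evalB v ψ
  | .basic g X x => v (.basic g X x)

/-- Instances of propositional tautologies in `Lprop(S)`. -/
def Taut (φ : LProp S) : Prop := ∀ v : LProp S → Prop, evalB v φ

/-- Disjunction of a nonempty list of formulas. -/
def bigOrNe : LProp S → List (LProp S) → LProp S
  | φ, [] => φ
  | φ, ψ :: l => or φ (bigOrNe ψ l)

end LProp

/-- The proof system AXun(S): C0 (propositional tautologies), C1 (equality),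
C2 (definiteness), C3 (composition), C4 (effectiveness), C5 (reversibility),
with modus ponens. -/
inductive AXunProv (S : Signature) : LProp S → Prop
  | taut {φ : LProp S} : LProp.Taut φ → AXunProv S φ
  | c1 (g : S.Intervention) (X : S.endo) (x x' : S.range X) (h : x ≠ x') :
      AXunProv S (LProp.imp (.basic g X x) (.neg (.basic g X x')))
  | c2 (g : S.Intervention) (X : S.endo) (x0 : S.range X) (l : List (S.range X))
      (h : x0 :: l = (Finset.univ : Finset (S.range X)).toList) :
      AXunProv S (LProp.bigOrNe (.basic g X x0) (l.map (fun x => LProp.basic g X x)))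
  | c3 (g : S.Intervention) (W : S.endo) (w : S.range W) (Y : S.endo) (y : S.range Y)
      (hW : g W = none) :
      AXunProv S (LProp.imp (.and (.basic g W w) (.basic g Y y))
        (.basic (Function.update g W (some w)) Y y))
  | c4 (g : S.Intervention) (X : S.endo) (x : S.range X) (h : g X = some x) :
      AXunProv S (.basic g X x)
  | c5 (g : S.Intervention) (W : S.endo) (w : S.range W) (Y : S.endo) (y : S.range Y)
      (hne : Y ≠ W) (hW : g W = none) (hY : g Y = none) :
      AXunProv S (LProp.imp
        (.and (.basic (Function.update g W (some w)) Y y)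
              (.basic (Function.update g Y (some y)) W w))
        (.basic g Y y))
  | mp {φ ψ : LProp S} : AXunProv S (LProp.imp φ ψ) → AXunProv S φ → AXunProv S ψ

/-! ## The language Lex(S) -/

/-- Boolean combinations of atoms `X = x`. -/
inductive BForm (S : Signature) : Type
  | atom (X : S.endo) (x : S.range X) : BForm S
  | neg : BForm S → BForm S
  | and : BForm S → BForm S → BForm S

def BForm.holds {S : Signature} (a : S.Asgn) : BForm S → Prop
  | .atom X x => a X = x
  | .neg φ => ¬ BForm.holds a φ
  | .and φ ψ => BForm.holds a φ ∧ BForm.holds a ψ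

/-- `Lex(S)`: Boolean combinations of basic formulas `[Y⃗ ← y⃗]ψ`, where `ψ` is a
Boolean combination of atoms. -/
inductive LEx (S : Signature) : Type
  | basic (g : S.Intervention) (ψ : BForm S) : LEx S
  | neg : LEx S → LEx S
  | and : LEx S → LEx S → LEx S

/-- Satisfaction of `Lex(S)` formulas in a causal model, relative to a context. -/
def CausalModel.satEx {S : Signature} (T : CausalModel S) (u : S.Ctx) : LEx S → Prop
  | .basic g ψ => ∀ a : S.Asgn, T.isSolution g u a → ψ.holds a
  | .neg φ => ¬ CausalModel.satEx T u φ
  | .and φ ψ => CausalModel.satEx T u φ ∧ CausalModel.satEx T u ψ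

/-! ## The counterfactual language L^C(Φ) and the system AX -/

/-- The language `L^C(Φ)`: primitive propositions closed under `∧`, `¬` and the
counterfactual connective `>` (`cf`). -/
inductive CForm (Φ : Type) : Type
  | atom : Φ → CForm Φ
  | fls : CForm Φ
  | neg : CForm Φ → CForm Φ
  | and : CForm Φ → CForm Φ → CForm Φ
  | cf : CForm Φ → CForm Φ → CForm Φ

namespace CForm

variable {Φ : Type}

def tr : CForm Φ := neg fls

def or (φ ψ : CForm Φ) : CForm Φ := neg (and (neg φ) (neg ψ))

def imp (φ ψ : CForm Φ) : CForm Φ := or (neg φ) ψ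

def iff (φ ψ : CForm Φ) : CForm Φ := and (imp φ ψ) (imp ψ φ)

/-- Boolean evaluation treating atoms and counterfactuals as atomic. -/
def evalB (v : CForm Φ → Prop) : CForm Φ → Prop
  | fls => False
  | neg φ => ¬ evalB v φ
  | and φ ψ => evalB v φ ∧ evalB v ψ
  | atom p => v (atom p)
  | cf φ ψ => v (cf φ ψ)

/-- Instances of propositional tautologies in `L^C(Φ)`. -/
def Taut (φ : CForm Φ) : Prop := ∀ v : CForm Φ → Prop, evalB v φ

def bigAnd : List (CForm Φ) → CForm Φ
  | [] => tr
  | [φ] => φ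
  | φ :: l => and φ (bigAnd l)

def bigOr : List (CForm Φ) → CForm Φ
  | [] => fls
  | [φ] => φ
  | φ :: l => or φ (bigOr l)

end CForm

/-- Provability in the system AX (axioms A0–A6, rules MP, RA1, RA2), augmented
with an arbitrary set `extra` of additional axioms. -/
inductive AXProv (Φ : Type) (extra : CForm Φ → Prop) : CForm Φ → Prop
  | taut {φ} : CForm.Taut φ → AXProv Φ extra φ
  | ax {φ} : extra φ → AXProv Φ extra φ
  | a1 (φ) : AXProv Φ extra (CForm.cf φ φ)
  | a2 (φ ψ1 ψ2) : AXProv Φ extra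
      (CForm.imp (CForm.and (CForm.cf φ ψ1) (CForm.cf φ ψ2)) (CForm.cf φ (CForm.and ψ1 ψ2)))
  | a3 (φ1 φ2 ψ) : AXProv Φ extra
      (CForm.imp (CForm.and (CForm.cf φ1 φ2) (CForm.cf φ1 ψ)) (CForm.cf (CForm.and φ1 φ2) ψ))
  | a4 (φ1 φ2 ψ) : AXProv Φ extra
      (CForm.imp (CForm.and (CForm.cf φ1 ψ) (CForm.cf φ2 ψ)) (CForm.cf (CForm.or φ1 φ2) ψ))
  | a5 : AXProv Φ extra (CForm.neg (CForm.cf CForm.tr CForm.fls))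
  | a6 (φ ψ) : AXProv Φ extra (CForm.imp φ (CForm.iff ψ (CForm.cf φ ψ)))
  | mp {φ ψ} : AXProv Φ extra (CForm.imp φ ψ) → AXProv Φ extra φ → AXProv Φ extra ψ
  | ra1 {φ φ' ψ} : AXProv Φ extra (CForm.iff φ φ') →
      AXProv Φ extra (CForm.imp (CForm.cf φ ψ) (CForm.cf φ' ψ))
  | ra2 {ψ ψ' φ} : AXProv Φ extra (CForm.imp ψ ψ') →
      AXProv Φ extra (CForm.imp (CForm.cf φ ψ) (CForm.cf φ ψ'))

/-- The axiom scheme A7. -/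
def A7Scheme (Φ : Type) : CForm Φ → Prop := fun θ =>
  ∃ φ ψ1 ψ2 : CForm Φ, θ = CForm.imp (CForm.cf φ (CForm.or ψ1 ψ2))
    (CForm.or (CForm.cf φ ψ1) (CForm.cf φ ψ2))

/-- Satisfaction of `L^C(Φ)` formulas in a counterfactual structure. -/
def CStruct.satC {Φ : Type} (M : CStruct Φ) : M.World → CForm Φ → Prop
  | w, .atom p => M.val w p
  | _, .fls => False
  | w, .neg φ => ¬ CStruct.satC M w φ
  | w, .and φ ψ => CStruct.satC M w φ ∧ CStruct.satC M w ψ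
  | w, .cf φ ψ => ∀ v ∈ M.closest w (fun u => CStruct.satC M u φ), CStruct.satC M v ψ

/-! ## The signature with three binary endogenous variables -/

/-- The signature with endogenous variables `V = {X1, X2, X3}` (as `Fin 3`), each
with range `{0, 1}` (as `Fin 2`), and an arbitrary exogenous part. -/
abbrev S3 (E : Type) (eF : Fintype E) (er : E → Type)
    (erF : ∀ e, Fintype (er e)) (erN : ∀ e, Nonempty (er e)) : Signature :=
  { exo := E
    endo := Fin 3
    exoFin := eF
    endoFin := inferInstance
    endoDec := inferInstance
    exoRange := er
    range := fun _ => Fin 2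
    exoRangeFin := erF
    rangeFin := fun _ => inferInstance
    exoRangeNe := erN
    rangeNe := fun _ => ⟨0⟩ }

/-- The intervention `Xi ← 1`. -/
def gI {E : Type} {eF : Fintype E} {er : E → Type}
    {erF : ∀ e, Fintype (er e)} {erN : ∀ e, Nonempty (er e)}
    (i : Fin 3) : (S3 E eF er erF erN).Intervention :=
  fun j => if j = i then some (1 : Fin 2) else none

/-- The intervention `Xi ← 1; Xj ← 1`. -/
def gII {E : Type} {eF : Fintype E} {er : E → Type}
    {erF : ∀ e, Fintype (er e)} {erN : ∀ e, Nonempty (er e)}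
    (i j : Fin 3) : (S3 E eF er erF erN).Intervention :=
  fun k => if k = i ∨ k = j then some (1 : Fin 2) else none

/-- The formula φ : `[X1←1](X2 = 1) ∧ [X1←1](X3 = 0) ∧ [X2←1](X3 = 1) ∧
[X2←1](X1 = 0) ∧ [X3←1](X1 = 1) ∧ [X3←1](X2 = 0)`. -/
def phi3 {E : Type} {eF : Fintype E} {er : E → Type}
    {erF : ∀ e, Fintype (er e)} {erN : ∀ e, Nonempty (er e)} :
    LProp (S3 E eF er erF erN) :=
  .and (.basic (gI 0) 1 1) <| .and (.basic (gI 0) 2 0) <| .and (.basic (gI 1) 2 1) <|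
    .and (.basic (gI 1) 0 0) <| .and (.basic (gI 2) 0 1) (.basic (gI 2) 1 0)

/-! ## Auxiliary development for the completeness proof -/

namespace AXunComplete

open LProp

variable {S : Signature}

/-- Semantic conditions on a valuation corresponding to axioms C1–C5. -/
def Good (S : Signature) (v : LProp S → Prop) : Prop :=
  (∀ (g : S.Intervention) (X : S.endo) (x x' : S.range X), x ≠ x' →
      v (.basic g X x) → ¬ v (.basic g X x')) ∧
  (∀ (g : S.Intervention) (X : S.endo), ∃ x, v (.basic g X x)) ∧
  (∀ (g : S.Intervention) (W : S.endo) (w : S.range W) (Y : S.endo) (y : S.range Y),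
      g W = none → v (.basic g W w) → v (.basic g Y y) →
      v (.basic (Function.update g W (some w)) Y y)) ∧
  (∀ (g : S.Intervention) (X : S.endo) (x : S.range X), g X = some x → v (.basic g X x)) ∧
  (∀ (g : S.Intervention) (W : S.endo) (w : S.range W) (Y : S.endo) (y : S.range Y),
      Y ≠ W → g W = none → g Y = none →
      v (.basic (Function.update g W (some w)) Y y) →
      v (.basic (Function.update g Y (some y)) W w) → v (.basic g Y y))

lemma evalB_imp (v : LProp S → Prop) (a b : LProp S) :
    evalB v (imp a b) ↔ (evalB v a → evalB v b) := by
  simp only [imp, evalB]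
  tauto

lemma evalB_bigOrNe (v : LProp S → Prop) :
    ∀ (l : List (LProp S)) (ψ : LProp S),
      evalB v (bigOrNe ψ l) ↔ (evalB v ψ ∨ ∃ χ ∈ l, evalB v χ)
  | [], ψ => by simp [bigOrNe]
  | χ :: l, ψ => by
      simp only [bigOrNe, LProp.or, evalB, evalB_bigOrNe v l χ, List.mem_cons]
      constructor
      · intro h
        by_cases h1 : evalB v ψ
        · exact Or.inl h1
        · rcases not_and.mp h h1 |> not_not.mp with h2 | ⟨χ', hχ', hv⟩
          · exact Or.inr ⟨χ, Or.inl rfl, h2⟩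
          · exact Or.inr ⟨χ', Or.inr hχ', hv⟩
      · rintro (h1 | ⟨χ', hχ' | hχ', hv⟩) ⟨hn1, hn2⟩
        · exact hn1 h1
        · exact hn2 (Or.inl (hχ' ▸ hv))
        · exact hn2 (Or.inr ⟨χ', hχ', hv⟩)

noncomputable def c2F (g : S.Intervention) (X : S.endo) : LProp S :=
  match (Finset.univ : Finset (S.range X)).toList with
  | [] => imp (.basic g X (Classical.arbitrary _)) (.basic g X (Classical.arbitrary _))
  | x0 :: l => bigOrNe (.basic g X x0) (l.map fun x => LProp.basic g X x)

lemma taut_impSelf (a : LProp S) : AXunProv S (imp a a) :=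
  AXunProv.taut (by intro v; simp only [imp, evalB]; tauto)

lemma prov_c2F (g : S.Intervention) (X : S.endo) : AXunProv S (c2F g X) := by
  unfold c2F
  split
  · exact taut_impSelf _
  · next x0 l h => exact AXunProv.c2 g X x0 l h.symm

lemma c2F_eval (v : LProp S → Prop) (g : S.Intervention) (X : S.endo)
    (h : evalB v (c2F g X)) : ∃ x, v (.basic g X x) := by
  unfold c2F at h
  split at h
  · next hl =>
    exfalso
    have hx := Finset.mem_toList.mpr (Finset.mem_univ (Classical.arbitrary (S.range X)))
    rw [hl] at hx
    exact absurd hx List.not_mem_nil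
  · next x0 l hl =>
    rcases (evalB_bigOrNe v _ _).mp h with h0 | ⟨χ, hχ, hvχ⟩
    · exact ⟨x0, h0⟩
    · rcases List.mem_map.mp hχ with ⟨x, _, rfl⟩
      exact ⟨x, hvχ⟩

/-- Index type enumerating all instances of the axioms C1–C5. -/
abbrev Idx (S : Signature) : Type :=
  (S.Intervention × Σ X : S.endo, S.range X × S.range X) ⊕
  ((S.Intervention × S.endo) ⊕
  ((S.Intervention × (Σ W : S.endo, S.range W) × Σ Y : S.endo, S.range Y) ⊕
  ((S.Intervention × Σ X : S.endo, S.range X) ⊕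
  (S.Intervention × (Σ W : S.endo, S.range W) × Σ Y : S.endo, S.range Y))))

open Classical in
/-- The axiom instance associated to an index. -/
noncomputable def axA : Idx S → LProp S
  | .inl (g, ⟨X, x, x'⟩) =>
      if x = x' then imp (.basic g X x) (.basic g X x)
      else imp (.basic g X x) (.neg (.basic g X x'))
  | .inr (.inl (g, X)) => c2F g X
  | .inr (.inr (.inl (g, ⟨W, w⟩, ⟨Y, y⟩))) =>
      if g W = none then
        imp (.and (.basic g W w) (.basic g Y y))
          (.basic (Function.update g W (some w)) Y y)
      else imp (.basic g W w) (.basic g W w)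
  | .inr (.inr (.inr (.inl (g, ⟨X, x⟩)))) =>
      if g X = some x then .basic g X x else imp (.basic g X x) (.basic g X x)
  | .inr (.inr (.inr (.inr (g, ⟨W, w⟩, ⟨Y, y⟩)))) =>
      if Y ≠ W ∧ g W = none ∧ g Y = none then
        imp (.and (.basic (Function.update g W (some w)) Y y)
                  (.basic (Function.update g Y (some y)) W w))
            (.basic g Y y)
      else imp (.basic g W w) (.basic g W w)

lemma prov_axA : ∀ i : Idx S, AXunProv S (axA i) := by
  intro i
  obtain (⟨g, X, x, x'⟩ | (⟨g, X⟩ | (⟨g, ⟨W, w⟩, ⟨Y, y⟩⟩ | (⟨g, X, x⟩ | ⟨g, ⟨W, w⟩, ⟨Y, y⟩⟩)))) := i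
  · by_cases hxx : x = x'
    · simp only [axA]; rw [if_pos hxx]; exact taut_impSelf _
    · simp only [axA]; rw [if_neg hxx]; exact AXunProv.c1 g X x x' hxx
  · exact prov_c2F g X
  · by_cases hW : g W = none
    · simp only [axA]; rw [if_pos hW]; exact AXunProv.c3 g W w Y y hW
    · simp only [axA]; rw [if_neg hW]; exact taut_impSelf _
  · by_cases hX : g X = some x
    · simp only [axA]; rw [if_pos hX]; exact AXunProv.c4 g X x hX
    · simp only [axA]; rw [if_neg hX]; exact taut_impSelf _
  · by_cases hc : Y ≠ W ∧ g W = none ∧ g Y = none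
    · simp only [axA]; rw [if_pos hc]; exact AXunProv.c5 g W w Y y hc.1 hc.2.1 hc.2.2
    · simp only [axA]; rw [if_neg hc]; exact taut_impSelf _

lemma good_of_eval (v : LProp S → Prop) (hA : ∀ i : Idx S, evalB v (axA i)) : Good S v := by
  refine ⟨?_, ?_, ?_, ?_, ?_⟩
  · intro g X x x' hne hx
    have h := hA (.inl (g, ⟨X, x, x'⟩))
    simp only [axA] at h
    rw [if_neg hne] at h
    simp only [imp, evalB] at h
    tauto
  · intro g X
    exact c2F_eval v g X (hA (.inr (.inl (g, X))))
  · intro g W w Y y hW hvW hvY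
    have h := hA (.inr (.inr (.inl (g, ⟨W, w⟩, ⟨Y, y⟩))))
    simp only [axA] at h
    rw [if_pos hW] at h
    simp only [imp, evalB] at h
    tauto
  · intro g X x hgx
    have h := hA (.inr (.inr (.inr (.inl (g, ⟨X, x⟩)))))
    simp only [axA] at h
    rw [if_pos hgx] at h
    exact h
  · intro g W w Y y hne hW hY h1 h2
    have h := hA (.inr (.inr (.inr (.inr (g, ⟨W, w⟩, ⟨Y, y⟩)))))
    simp only [axA] at h
    rw [if_pos ⟨hne, hW, hY⟩] at h
    simp only [imp, evalB] at h
    tauto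

lemma foldr_mp (φ : LProp S) {ι : Type} :
    ∀ (l : List ι) (A : ι → LProp S), (∀ i ∈ l, AXunProv S (A i)) →
      AXunProv S (l.foldr (fun i ψ => imp (A i) ψ) φ) → AXunProv S φ
  | [], _, _, h => h
  | i :: l, A, hA, h =>
      foldr_mp φ l A (fun j hj => hA j (List.mem_cons_of_mem _ hj))
        (AXunProv.mp h (hA i List.mem_cons_self))

lemma evalB_foldr (v : LProp S → Prop) (φ : LProp S) {ι : Type} :
    ∀ (l : List ι) (A : ι → LProp S),
      evalB v (l.foldr (fun i ψ => imp (A i) ψ) φ) ↔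
        ((∀ i ∈ l, evalB v (A i)) → evalB v φ)
  | [], A => by simp
  | i :: l, A => by
      rw [List.foldr_cons, evalB_imp, evalB_foldr v φ l A]
      simp only [List.mem_cons]
      constructor
      · intro h hall
        exact h (hall i (Or.inl rfl)) fun j hj => hall j (Or.inr hj)
      · intro h ha hl
        exact h fun j hj => by
          rcases hj with rfl | hj
          exacts [ha, hl j hj]

lemma provOfEntails (φ : LProp S)
    (h : ∀ v : LProp S → Prop, Good S v → evalB v φ) : AXunProv S φ := by
  classical
  have hfold : AXunProv S (((Finset.univ : Finset (Idx S)).toList).foldr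
      (fun i ψ => imp (axA i) ψ) φ) := by
    apply AXunProv.taut
    intro v
    rw [evalB_foldr]
    intro hv
    exact h v (good_of_eval v fun i => hv i (Finset.mem_toList.mpr (Finset.mem_univ i)))
  exact foldr_mp φ _ _ (fun i _ => prov_axA i) hfold

lemma modelOfGood (v : LProp S → Prop) (hv : Good S v) :
    ∃ T : CausalModel S, T.UniqueSolutions ∧
      ∀ (u : S.Ctx) (ψ : LProp S), T.sat u ψ ↔ evalB v ψ := by
  classical
  obtain ⟨G1, G2, G3, G4, G5⟩ := hv
  set sol : S.Intervention → S.Asgn := fun g X => Classical.choose (G2 g X) with hsoldef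
  have hsol : ∀ g X, v (.basic g X (sol g X)) := fun g X => Classical.choose_spec (G2 g X)
  have hsolu : ∀ g X x, v (.basic g X x) → x = sol g X := by
    intro g X x hx
    by_contra hne
    exact G1 g X x (sol g X) hne hx (hsol g X)
  have some_sol : ∀ (g : S.Intervention) (X) (x), g X = some x → sol g X = x :=
    fun g X x hx => (hsolu g X x (G4 g X x hx)).symm
  -- Extending an intervention by the current value of an unset variable
  -- does not change any value.
  have hstep : ∀ (g : S.Intervention) (W : S.endo), g W = none →
      sol (Function.update g W (some (sol g W))) = sol g := by
    intro g W hW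
    funext X
    exact (hsolu _ X (sol g X) (G3 g W (sol g W) X (sol g X) hW (hsol g W) (hsol g X))).symm
  have key : ∀ (n : ℕ) (g g' : S.Intervention),
      (Finset.univ.filter fun Y => g' Y ≠ g Y).card ≤ n →
      (∀ Y, g' Y = g Y ∨ (g Y = none ∧ g' Y = some (sol g Y))) →
      sol g' = sol g := by
    intro n
    induction n with
    | zero =>
      intro g g' hc _
      have hEq : g' = g := by
        funext Y
        by_contra hne
        have hY : Y ∈ Finset.univ.filter fun Y => g' Y ≠ g Y := by
          simp only [Finset.mem_filter, Finset.mem_univ, true_and]; exact hne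
        have := Finset.card_pos.mpr ⟨Y, hY⟩
        omega
      rw [hEq]
    | succ n ih =>
      intro g g' hc hrel
      by_cases hall : ∀ Y, g' Y = g Y
      · rw [funext hall]
      · push_neg at hall
        obtain ⟨W, hW⟩ := hall
        obtain ⟨hgW, hg'W⟩ := (hrel W).resolve_left hW
        have hsg : sol (Function.update g W (some (sol g W))) = sol g := hstep g W hgW
        have h1 : sol g' = sol (Function.update g W (some (sol g W))) := by
          apply ih (Function.update g W (some (sol g W))) g' ?_ ?_
          · have hsub : (Finset.univ.filter fun Y =>
                g' Y ≠ Function.update g W (some (sol g W)) Y) ⊆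
                (Finset.univ.filter fun Y => g' Y ≠ g Y).erase W := by
              intro Y hY
              simp only [Finset.mem_filter, Finset.mem_univ, true_and] at hY
              rcases eq_or_ne Y W with rfl | hne
              · exact absurd (by rw [hg'W, Function.update_self]) hY
              · refine Finset.mem_erase.mpr ⟨hne, ?_⟩
                simp only [Finset.mem_filter, Finset.mem_univ, true_and]
                rwa [Function.update_of_ne hne] at hY
            have hWmem : W ∈ Finset.univ.filter fun Y => g' Y ≠ g Y := by
              simp only [Finset.mem_filter, Finset.mem_univ, true_and]; exact hW
            have := Finset.card_le_card hsub
            rw [Finset.card_erase_of_mem hWmem] at this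
            omega
          · intro Y
            rcases eq_or_ne Y W with rfl | hne
            · left; rw [hg'W, Function.update_self]
            · rw [Function.update_of_ne hne, hsg]
              exact hrel Y
        rw [h1, hsg]
  set gful : ∀ X : S.endo, (∀ Y : {Y : S.endo // Y ≠ X}, S.range Y.1) → S.Intervention :=
    fun X b Y => if h : Y = X then none else some (b ⟨Y, h⟩) with hgful
  set T : CausalModel S := ⟨fun X _ b => sol (gful X b) X⟩ with hT
  have hexist : ∀ (g : S.Intervention) (u : S.Ctx), T.isSolution g u (sol g) := by
    intro g u X
    constructor
    · intro x hx; exact some_sol g X x hx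
    · intro hX
      have hfull : sol (gful X fun Y => sol g Y.1) = sol g := by
        apply key ((Finset.univ.filter fun Y =>
          (gful X fun Y' => sol g Y'.1) Y ≠ g Y).card) g _ le_rfl
        intro Y
        by_cases hYX : Y = X
        · subst hYX
          left
          simp [hgful, hX]
        · rcases hgY : g Y with _ | z
          · right
            refine ⟨rfl, ?_⟩
            simp only [hgful]
            rw [dif_neg hYX]
          · left
            simp only [hgful]
            rw [dif_neg hYX, some_sol g Y z hgY]
      rw [hT]
      exact (congrFun hfull X).symm
  have huniq : ∀ (n : ℕ) (g : S.Intervention) (u : S.Ctx) (b : S.Asgn),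
      (Finset.univ.filter fun Y => g Y = none).card ≤ n →
      T.isSolution g u b → b = sol g := by
    intro n
    induction n with
    | zero =>
      intro g u b hc hb
      funext X
      rcases hgX : g X with _ | x
      · exfalso
        have hX : X ∈ Finset.univ.filter fun Y => g Y = none := by
          simp only [Finset.mem_filter, Finset.mem_univ, true_and]; exact hgX
        have := Finset.card_pos.mpr ⟨X, hX⟩
        omega
      · rw [(hb X).1 x hgX]
        exact (some_sol g X x hgX).symm
    | succ n ih =>
      intro g u b hc hb
      funext X
      rcases hgX : g X with _ | x
      · -- X unset
        have hsolupd : ∀ (W : S.endo), T.isSolution (Function.update g W (some (b W))) u b := by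
          intro W Z
          constructor
          · intro z hz
            rcases eq_or_ne Z W with rfl | hne
            · rw [Function.update_self] at hz
              exact (Option.some_inj.mp hz)
            · rw [Function.update_of_ne hne] at hz
              exact (hb Z).1 z hz
          · intro hz
            rcases eq_or_ne Z W with rfl | hne
            · rw [Function.update_self] at hz; cases hz
            · rw [Function.update_of_ne hne] at hz
              exact (hb Z).2 hz
        have hcard : ∀ (W' : S.endo) (val : S.range W'), g W' = none →
            (Finset.univ.filter fun Y =>
              Function.update g W' (some val) Y = none).card ≤ n := by
          intro W' val hgW'
          have hEq : (Finset.univ.filter fun Y => Function.update g W' (some val) Y = none) =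
              (Finset.univ.filter fun Y => g Y = none).erase W' := by
            ext Y
            simp only [Finset.mem_filter, Finset.mem_univ, true_and, Finset.mem_erase]
            rcases eq_or_ne Y W' with rfl | hne
            · simp [Function.update_self]
            · simp [Function.update_of_ne hne, hne]
          have hW'mem : W' ∈ Finset.univ.filter fun Y => g Y = none := by
            simp only [Finset.mem_filter, Finset.mem_univ, true_and]; exact hgW'
          rw [hEq, Finset.card_erase_of_mem hW'mem]
          omega
        by_cases hex : ∃ W, W ≠ X ∧ g W = none
        · obtain ⟨W, hWX, hgW⟩ := hex
          have hbW := ih (Function.update g W (some (b W))) u b (hcard W (b W) hgW)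
            (hsolupd W)
          have hbX := ih (Function.update g X (some (b X))) u b (hcard X (b X) hgX)
            (hsolupd X)
          have h1 : v (.basic (Function.update g W (some (b W))) X (b X)) := by
            have h := hsol (Function.update g W (some (b W))) X
            rwa [← congrFun hbW X] at h
          have h2 : v (.basic (Function.update g X (some (b X))) W (b W)) := by
            have h := hsol (Function.update g X (some (b X))) W
            rwa [← congrFun hbX W] at h
          exact hsolu g X (b X) (G5 g W (b W) X (b X) (Ne.symm hWX) hgW hgX h1 h2)
        · push_neg at hex
          have hfull : (gful X fun Y => b Y.1) = g := by
            funext Y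
            by_cases hYX : Y = X
            · subst hYX
              simp [hgful, hgX]
            · rcases hgY : g Y with _ | z
              · exact absurd hgY (hex Y hYX)
              · simp only [hgful]
                rw [dif_neg hYX, (hb Y).1 z hgY]
          have hFX := (hb X).2 hgX
          rw [hFX, hT]
          show sol (gful X fun Y => b Y.1) X = sol g X
          rw [hfull]
      · rw [(hb X).1 x hgX]
        exact (some_sol g X x hgX).symm
  refine ⟨T, ?_, ?_⟩
  · intro g u
    exact ⟨sol g, hexist g u,
      fun b hb => huniq ((Finset.univ.filter fun Y => g Y = none).card) g u b le_rfl hb⟩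
  · intro u ψ
    induction ψ with
    | basic g X x =>
      show (∀ a, T.isSolution g u a → a X = x) ↔ evalB v (.basic g X x)
      constructor
      · intro ha
        have hx := ha (sol g) (hexist g u)
        show v (.basic g X x)
        rw [← hx]
        exact hsol g X
      · intro hx a ha
        rw [huniq ((Finset.univ.filter fun Y => g Y = none).card) g u a le_rfl ha]
        exact (hsolu g X x hx).symm
    | neg ψ ihψ => exact not_congr ihψ
    | and ψ χ ih1 ih2 => exact and_congr ih1 ih2

end AXunComplete

/-- AXun(S) is complete for `Lprop(S)` with respect to `Tun(S)`:
every valid formula is provable. -/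
theorem stmt18 (S : Signature) (φ : LProp S)
    (h : ∀ T : CausalModel S, T.UniqueSolutions → ∀ u : S.Ctx, T.sat u φ) :
    AXunProv S φ := by
  apply AXunComplete.provOfEntails
  intro v hv
  obtain ⟨T, hT, hiff⟩ := AXunComplete.modelOfGood v hv
  have u : S.Ctx := fun e => Classical.arbitrary _
  exact (hiff u φ).mp (h T hT u)
end

section
/- For every finite set Φ of primitive propositions: (i) the axiom system AX is sound and complete for the language L^C(Φ) with respect to the class M(Φ) of all counterfactual structures over Φ, and (ii) the axiom system AX+ (AX together with A7) is sound and complete for L^C(Φ) with respect to the class M+(Φ) of counterfactual structures in which each ≺_w is a strict total order on W_w. -/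
/-! ## Auxiliary development for STATEMENT 19 -/

namespace Stmt19

variable {Φ : Type}

/-! ### evalB and satC basic lemmas -/

lemma evalB_fls (v : CForm Φ → Prop) : CForm.evalB v CForm.fls ↔ False := Iff.rfl
lemma evalB_neg (v : CForm Φ → Prop) (φ : CForm Φ) :
    CForm.evalB v (CForm.neg φ) ↔ ¬ CForm.evalB v φ := Iff.rfl
lemma evalB_and (v : CForm Φ → Prop) (φ ψ : CForm Φ) :
    CForm.evalB v (CForm.and φ ψ) ↔ CForm.evalB v φ ∧ CForm.evalB v ψ := Iff.rfl
lemma evalB_cf (v : CForm Φ → Prop) (φ ψ : CForm Φ) :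
    CForm.evalB v (CForm.cf φ ψ) ↔ v (CForm.cf φ ψ) := Iff.rfl
lemma evalB_tr (v : CForm Φ → Prop) : CForm.evalB v (CForm.tr : CForm Φ) ↔ True := by
  simp [CForm.tr, evalB_neg, evalB_fls]
lemma evalB_or (v : CForm Φ → Prop) (φ ψ : CForm Φ) :
    CForm.evalB v (CForm.or φ ψ) ↔ CForm.evalB v φ ∨ CForm.evalB v ψ := by
  simp only [CForm.or, evalB_neg, evalB_and]; tauto
lemma evalB_imp (v : CForm Φ → Prop) (φ ψ : CForm Φ) :
    CForm.evalB v (CForm.imp φ ψ) ↔ (CForm.evalB v φ → CForm.evalB v ψ) := by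
  simp only [CForm.imp, evalB_or, evalB_neg]; tauto
lemma evalB_iff (v : CForm Φ → Prop) (φ ψ : CForm Φ) :
    CForm.evalB v (CForm.iff φ ψ) ↔ (CForm.evalB v φ ↔ CForm.evalB v ψ) := by
  simp only [CForm.iff, evalB_and, evalB_imp, evalB_neg]; tauto

variable {M : CStruct Φ}

lemma satC_atom (w : M.World) (p : Φ) : M.satC w (CForm.atom p) ↔ M.val w p := Iff.rfl
lemma satC_fls (w : M.World) : M.satC w (CForm.fls) ↔ False := Iff.rfl
lemma satC_neg (w : M.World) (φ : CForm Φ) : M.satC w (CForm.neg φ) ↔ ¬ M.satC w φ := Iff.rfl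
lemma satC_and (w : M.World) (φ ψ : CForm Φ) :
    M.satC w (CForm.and φ ψ) ↔ M.satC w φ ∧ M.satC w ψ := Iff.rfl
lemma satC_cf (w : M.World) (φ ψ : CForm Φ) :
    M.satC w (CForm.cf φ ψ) ↔
      ∀ v ∈ M.closest w (fun u => M.satC u φ), M.satC v ψ := Iff.rfl
lemma satC_tr (w : M.World) : M.satC w (CForm.tr) ↔ True := by
  simp [CForm.tr, satC_neg, satC_fls]
lemma satC_or (w : M.World) (φ ψ : CForm Φ) :
    M.satC w (CForm.or φ ψ) ↔ M.satC w φ ∨ M.satC w ψ := by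
  simp only [CForm.or, satC_neg, satC_and]; tauto
lemma satC_imp (w : M.World) (φ ψ : CForm Φ) :
    M.satC w (CForm.imp φ ψ) ↔ (M.satC w φ → M.satC w ψ) := by
  simp only [CForm.imp, satC_or, satC_neg]; tauto
lemma satC_iff (w : M.World) (φ ψ : CForm Φ) :
    M.satC w (CForm.iff φ ψ) ↔ (M.satC w φ ↔ M.satC w ψ) := by
  simp only [CForm.iff, satC_and, satC_imp]; tauto

lemma satC_evalB (w : M.World) (φ : CForm Φ) :
    M.satC w φ ↔ CForm.evalB (M.satC w) φ := by
  induction φ with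
  | atom p => exact Iff.rfl
  | fls => exact Iff.rfl
  | neg φ ih => simpa [satC_neg, evalB_neg] using not_congr ih
  | and φ ψ ih1 ih2 => simpa [satC_and, evalB_and] using and_congr ih1 ih2
  | cf φ ψ _ _ => exact Iff.rfl

/-! ### basic facts about closest -/

lemma mem_W_self (w : M.World) : M.inW w w := M.self_mem w

lemma lt_center (w u : M.World) (h : u ≠ w) : M.lt w w u :=
  ⟨(M.centered w u h).1, (M.centered w u h).2⟩

lemma not_lt_to_center (w u : M.World) : ¬ M.lt w u w := by
  intro hlt
  rcases eq_or_ne u w with rfl | hne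
  · exact hlt.2 hlt.1
  · exact (M.centered w u hne).2 hlt.1

lemma lt_irrefl (w u : M.World) : ¬ M.lt w u u := fun h => h.2 h.1

lemma lt_inW_left {w u v : M.World} (h : M.lt w u v) : M.inW w u := ⟨v, h.1⟩

lemma lt_trans' {w a b c : M.World} (hc : M.inW w c)
    (h1 : M.lt w a b) (h2 : M.lt w b c) : M.lt w a c := by
  have ha : M.inW w a := ⟨b, h1.1⟩
  have hb : M.inW w b := ⟨c, h2.1⟩
  refine ⟨M.trans_on w a b c ha hb hc h1.1 h2.1, ?_⟩
  intro hca
  exact h2.2 (M.trans_on w c a b hc ha hb hca h1.1)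

/-- A finite set with a transitive irreflexive relation on it has a minimal element. -/
lemma finset_exists_minimal {α : Type} (r : α → α → Prop) (s : Finset α)
    (hs : s.Nonempty)
    (htr : ∀ a ∈ s, ∀ b ∈ s, ∀ c ∈ s, r a b → r b c → r a c)
    (hirr : ∀ a ∈ s, ¬ r a a) :
    ∃ m ∈ s, ∀ y ∈ s, ¬ r y m := by
  classical
  revert hs htr hirr
  induction s using Finset.strongInduction with
  | _ s ih =>
  intro hs htr hirr
  obtain ⟨a, has⟩ := hs
  by_cases hbelow : ∃ b ∈ s, r b a
  · obtain ⟨b, hbs, hba⟩ := hbelow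
    have hbne : b ≠ a := by rintro rfl; exact hirr b hbs hba
    set t : Finset α := s.filter (fun y => r y a) with ht
    have hts : t ⊂ s := by
      refine Finset.filter_ssubset.2 ⟨a, has, hirr a has⟩
    have htmem : ∀ {y}, y ∈ t ↔ y ∈ s ∧ r y a := by intro y; simp [ht]
    obtain ⟨m, hmt, hmin⟩ := ih t hts ⟨b, htmem.2 ⟨hbs, hba⟩⟩
      (fun x hx y hy z hz hxy hyz =>
        htr x (htmem.1 hx).1 y (htmem.1 hy).1 z (htmem.1 hz).1 hxy hyz)
      (fun x hx => hirr x (htmem.1 hx).1)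
    refine ⟨m, (htmem.1 hmt).1, ?_⟩
    intro y hy hym
    have hya : r y a := htr y hy m (htmem.1 hmt).1 a has hym (htmem.1 hmt).2
    exact hmin y (htmem.2 ⟨hy, hya⟩) hym
  · push_neg at hbelow
    exact ⟨a, has, hbelow⟩

/-- Below any world of `W_w` satisfying `A` there is a closest `A`-world. -/
lemma exists_closest_below (w : M.World) (A : M.World → Prop) (x : M.World)
    (hx : M.inW w x) (hAx : A x) :
    ∃ m, m ∈ M.closest w A ∧ (M.R w m x) := by
  classical
  haveI := M.worldFin
  let s : Finset M.World :=
    Finset.univ.filter (fun y => M.inW w y ∧ A y ∧ M.R w y x)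
  have hmem : ∀ {y}, y ∈ s ↔ (M.inW w y ∧ A y ∧ M.R w y x) := by
    intro y; simp [s]
  have hxs : x ∈ s := hmem.2 ⟨hx, hAx, M.refl_on w x hx⟩
  obtain ⟨m, hms, hmin⟩ := finset_exists_minimal (M.lt w) s ⟨x, hxs⟩
    (fun a haa b hbb c hcc hab hbc => lt_trans' ((hmem.1 hcc).1) hab hbc)
    (fun a _ => lt_irrefl w a)
  obtain ⟨hmW, hmA, hmx⟩ := hmem.1 hms
  refine ⟨m, ⟨hmW, hmA, ?_⟩, hmx⟩
  intro y hAy hlt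
  have hyW : M.inW w y := lt_inW_left hlt
  have hyx : M.R w y x := M.trans_on w y m x hyW hmW hx hlt.1 hmx
  exact hmin y (hmem.2 ⟨hyW, hAy, hyx⟩) hlt

lemma closest_congr (w : M.World) {A B : M.World → Prop}
    (h : ∀ y, M.inW w y → (A y ↔ B y)) :
    M.closest w A = M.closest w B := by
  ext v
  constructor <;> intro hv
  · refine ⟨hv.1, (h v hv.1).1 hv.2.1, ?_⟩
    intro v' hBv' hlt
    exact hv.2.2 v' ((h v' (lt_inW_left hlt)).2 hBv') hlt
  · refine ⟨hv.1, (h v hv.1).2 hv.2.1, ?_⟩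
    intro v' hAv' hlt
    exact hv.2.2 v' ((h v' (lt_inW_left hlt)).1 hAv') hlt

/-! ### Soundness -/

lemma closest_center (w : M.World) (A : M.World → Prop) (hA : A w) :
    M.closest w A = {w} := by
  ext v
  simp only [Set.mem_singleton_iff]
  constructor
  · rintro ⟨hvW, hvA, hmin⟩
    by_contra hne
    exact hmin w hA (lt_center w v hne)
  · intro h
    rw [h]
    exact ⟨mem_W_self w, hA, fun v' _ => not_lt_to_center w v'⟩

theorem soundness {extra : CForm Φ → Prop} (C : Set (CStruct Φ))
    (hC : ∀ M ∈ C, ∀ (w : M.World) θ, extra θ → M.satC w θ)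
    {φ : CForm Φ} (h : AXProv Φ extra φ) :
    ∀ M ∈ C, ∀ (w : M.World), M.satC w φ := by
  induction h with
  | @taut φ ht =>
    intro M _ w
    exact (satC_evalB w φ).2 (ht (M.satC w))
  | @ax φ hφ => intro M hM w; exact hC M hM w φ hφ
  | a1 φ =>
    intro M _ w
    exact fun v hv => hv.2.1
  | a2 φ ψ1 ψ2 =>
    intro M _ w
    rw [satC_imp]
    rintro ⟨h1, h2⟩ v hv
    exact ⟨h1 v hv, h2 v hv⟩
  | a3 φ1 φ2 ψ =>
    intro M _ w
    rw [satC_imp]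
    rintro ⟨h1, h2⟩ v hv
    rcases hv with ⟨hvW, hvA, hmin⟩
    rw [satC_and] at hvA
    refine h2 v ⟨hvW, hvA.1, ?_⟩
    intro v' hv' hlt
    obtain ⟨m, hm, hmx⟩ := exists_closest_below w (fun u => M.satC u φ1) v'
      (lt_inW_left hlt) hv'
    have hm2 : M.satC m φ2 := h1 m hm
    have hmv : M.lt w m v := by
      rcases eq_or_ne m v' with rfl | hne
      · exact hlt
      · refine ⟨M.trans_on w m v' v ⟨v', hmx⟩ (lt_inW_left hlt) hvW hmx hlt.1, ?_⟩
        intro hvm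
        exact hlt.2 (M.trans_on w v m v' hvW ⟨v', hmx⟩ (lt_inW_left hlt) hvm hmx)
    exact hmin m ((satC_and m φ1 φ2).2 ⟨hm.2.1, hm2⟩) hmv
  | a4 φ1 φ2 ψ =>
    intro M _ w
    rw [satC_imp]
    rintro ⟨h1, h2⟩ v hv
    rcases hv with ⟨hvW, hvA, hmin⟩
    rw [satC_or] at hvA
    rcases hvA with h | h
    · exact h1 v ⟨hvW, h, fun v' hv' hlt =>
        hmin v' ((satC_or v' φ1 φ2).2 (Or.inl hv')) hlt⟩
    · exact h2 v ⟨hvW, h, fun v' hv' hlt =>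
        hmin v' ((satC_or v' φ1 φ2).2 (Or.inr hv')) hlt⟩
  | a5 =>
    intro M _ w
    rw [satC_neg]
    intro h5
    have hw : w ∈ M.closest w (fun u => M.satC u CForm.tr) := by
      rw [closest_center w _ ((satC_tr w).2 trivial)]; rfl
    exact (satC_fls w).1 (h5 w hw)
  | a6 φ ψ =>
    intro M _ w
    rw [satC_imp, satC_iff]
    intro hφ
    rw [satC_cf, closest_center w _ hφ]
    constructor
    · intro hψ v hv
      rw [Set.mem_singleton_iff] at hv
      subst hv; exact hψ
    · intro h
      exact h w rfl
  | mp h1 h2 ih1 ih2 =>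
    intro M hM w
    exact (satC_imp _ _ _).1 (ih1 M hM w) (ih2 M hM w)
  | @ra1 φ φ' ψ h ih =>
    intro M hM w
    rw [satC_imp]
    intro h1
    have hcl : M.closest w (fun u => M.satC u φ) = M.closest w (fun u => M.satC u φ') := by
      refine closest_congr w (fun y _ => ?_)
      have := (satC_iff y φ φ').1 (ih M hM y)
      exact this
    rw [satC_cf] at h1 ⊢
    rw [← hcl]
    exact h1
  | @ra2 ψ ψ' φ h ih =>
    intro M hM w
    rw [satC_imp]
    intro h1 v hv
    exact (satC_imp v ψ ψ').1 (ih M hM v) (h1 v hv)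

theorem soundness_A7 (M : CStruct Φ) (hM : M.totalOrd) (w : M.World)
    (θ : CForm Φ) (hθ : A7Scheme Φ θ) : M.satC w θ := by
  obtain ⟨φ, ψ1, ψ2, rfl⟩ := hθ
  rw [satC_imp]
  intro h
  rw [satC_or]
  by_contra hcon
  push_neg at hcon
  obtain ⟨hn1, hn2⟩ := hcon
  rw [satC_cf] at hn1 hn2
  push_neg at hn1 hn2
  obtain ⟨v1, hv1, hnψ1⟩ := hn1
  obtain ⟨v2, hv2, hnψ2⟩ := hn2
  have hne : v1 ≠ v2 := by
    rintro rfl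
    rcases (satC_or v1 ψ1 ψ2).1 (h v1 hv1) with h' | h'
    · exact hnψ1 h'
    · exact hnψ2 h'
  rcases hM w v1 v2 hv1.1 hv2.1 hne with hlt | hlt
  · exact hv2.2.2 v1 hv1.2.1 hlt
  · exact hv1.2.2 v2 hv2.2.1 hlt


/-! ### Proof-theoretic infrastructure -/

def conj : List (CForm Φ) → CForm Φ
  | [] => CForm.tr
  | χ :: l => CForm.and χ (conj l)

def disj : List (CForm Φ) → CForm Φ
  | [] => CForm.fls
  | χ :: l => CForm.or χ (disj l)

lemma evalB_conj (v : CForm Φ → Prop) (l : List (CForm Φ)) :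
    CForm.evalB v (conj l) ↔ ∀ χ ∈ l, CForm.evalB v χ := by
  induction l with
  | nil => simp [conj, evalB_tr]
  | cons χ l ih => simp [conj, evalB_and, ih]

lemma evalB_disj (v : CForm Φ → Prop) (l : List (CForm Φ)) :
    CForm.evalB v (disj l) ↔ ∃ χ ∈ l, CForm.evalB v χ := by
  induction l with
  | nil => simp [disj, evalB_fls]
  | cons χ l ih => simp [disj, evalB_or, ih]

section ProofSystem

variable (ex : CForm Φ → Prop)

/-- Abbreviation for provability. -/
abbrev Prv (φ : CForm Φ) : Prop := AXProv Φ ex φ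

variable {ex}

lemma tautI {φ ψ : CForm Φ} (h : ∀ v, CForm.evalB v φ → CForm.evalB v ψ) :
    Prv ex (CForm.imp φ ψ) :=
  AXProv.taut (fun v => (evalB_imp v φ ψ).2 (h v))

lemma tautIff {φ ψ : CForm Φ} (h : ∀ v, CForm.evalB v φ ↔ CForm.evalB v ψ) :
    Prv ex (CForm.iff φ ψ) :=
  AXProv.taut (fun v => (evalB_iff v φ ψ).2 (h v))

lemma prv_cut {φ ψ χ : CForm Φ} (h1 : Prv ex (CForm.imp φ ψ))
    (h2 : Prv ex (CForm.imp ψ χ)) : Prv ex (CForm.imp φ χ) := by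
  have t : Prv ex (CForm.imp (CForm.imp φ ψ) (CForm.imp (CForm.imp ψ χ) (CForm.imp φ χ))) :=
    AXProv.taut (by intro v; simp only [evalB_imp]; tauto)
  exact AXProv.mp (AXProv.mp t h1) h2

lemma prv_and_intro {φ ψ χ : CForm Φ} (h1 : Prv ex (CForm.imp φ ψ))
    (h2 : Prv ex (CForm.imp φ χ)) : Prv ex (CForm.imp φ (CForm.and ψ χ)) := by
  have t : Prv ex (CForm.imp (CForm.imp φ ψ)
      (CForm.imp (CForm.imp φ χ) (CForm.imp φ (CForm.and ψ χ)))) :=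
    AXProv.taut (by intro v; simp only [evalB_imp, evalB_and]; tauto)
  exact AXProv.mp (AXProv.mp t h1) h2

/-- Provability from a set of hypotheses. -/
def TPrv (S : Set (CForm Φ)) (φ : CForm Φ) : Prop :=
  ∃ l : List (CForm Φ), (∀ χ ∈ l, χ ∈ S) ∧ Prv ex (CForm.imp (conj l) φ)

variable (ex)

/-- Consistency of a set of hypotheses. -/
def Con (S : Set (CForm Φ)) : Prop := ¬ TPrv (ex := ex) S CForm.fls

variable {ex}

lemma tprv_of_mem {S : Set (CForm Φ)} {φ : CForm Φ} (h : φ ∈ S) : TPrv (ex := ex) S φ :=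
  ⟨[φ], by simpa using h, tautI (by intro v; simp [conj, evalB_and]; tauto)⟩

lemma tprv_of_prv {S : Set (CForm Φ)} {φ : CForm Φ} (h : Prv ex φ) : TPrv (ex := ex) S φ := by
  refine ⟨[], by simp, ?_⟩
  have t : Prv ex (CForm.imp φ (CForm.imp (conj []) φ)) :=
    AXProv.taut (by intro v; simp only [evalB_imp]; tauto)
  exact AXProv.mp t h

lemma tprv_mono {S S' : Set (CForm Φ)} {φ : CForm Φ} (h : TPrv (ex := ex) S φ)
    (hss : S ⊆ S') : TPrv (ex := ex) S' φ := by
  obtain ⟨l, hl, hp⟩ := h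
  exact ⟨l, fun χ hχ => hss (hl χ hχ), hp⟩

lemma tprv_mp {S : Set (CForm Φ)} {φ ψ : CForm Φ} (h1 : TPrv (ex := ex) S (CForm.imp φ ψ))
    (h2 : TPrv (ex := ex) S φ) : TPrv (ex := ex) S ψ := by
  obtain ⟨l1, hl1, hp1⟩ := h1
  obtain ⟨l2, hl2, hp2⟩ := h2
  refine ⟨l1 ++ l2, ?_, ?_⟩
  · intro χ hχ
    rcases List.mem_append.1 hχ with h | h
    · exact hl1 χ h
    · exact hl2 χ h
  · have e1 : Prv ex (CForm.imp (conj (l1 ++ l2)) (conj l1)) :=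
      tautI (by intro v; simp only [evalB_conj]; intro h χ hχ; exact h χ (List.mem_append.2 (Or.inl hχ)))
    have e2 : Prv ex (CForm.imp (conj (l1 ++ l2)) (conj l2)) :=
      tautI (by intro v; simp only [evalB_conj]; intro h χ hχ; exact h χ (List.mem_append.2 (Or.inr hχ)))
    have i1 : Prv ex (CForm.imp (conj (l1 ++ l2)) (CForm.imp φ ψ)) := prv_cut e1 hp1
    have i2 : Prv ex (CForm.imp (conj (l1 ++ l2)) φ) := prv_cut e2 hp2
    have t : Prv ex (CForm.imp (CForm.imp (conj (l1 ++ l2)) (CForm.imp φ ψ))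
        (CForm.imp (CForm.imp (conj (l1 ++ l2)) φ) (CForm.imp (conj (l1 ++ l2)) ψ))) :=
      AXProv.taut (by intro v; simp only [evalB_imp]; tauto)
    exact AXProv.mp (AXProv.mp t i1) i2

lemma tprv_insert {S : Set (CForm Φ)} {φ ψ : CForm Φ}
    (h : TPrv (ex := ex) (insert φ S) ψ) : TPrv (ex := ex) S (CForm.imp φ ψ) := by
  classical
  obtain ⟨l, hl, hp⟩ := h
  refine ⟨l.filter (fun χ => χ ≠ φ), ?_, ?_⟩
  · intro χ hχ
    rw [List.mem_filter] at hχ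
    rcases hl χ hχ.1 with h | h
    · exact absurd h (by simpa using hχ.2)
    · exact h
  · have e : Prv ex (CForm.imp (CForm.and φ (conj (l.filter (fun χ => χ ≠ φ))))
        (conj l)) := by
      refine tautI ?_
      intro v
      simp only [evalB_and, evalB_conj]
      rintro ⟨hφ, hrest⟩ χ hχ
      by_cases hc : χ = φ
      · rw [hc]; exact hφ
      · exact hrest χ (List.mem_filter.2 ⟨hχ, by simpa using hc⟩)
    have e2 : Prv ex (CForm.imp (CForm.and φ (conj (l.filter (fun χ => χ ≠ φ)))) ψ) :=
      prv_cut e hp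
    have t : Prv ex (CForm.imp
        (CForm.imp (CForm.and φ (conj (l.filter (fun χ => χ ≠ φ)))) ψ)
        (CForm.imp (conj (l.filter (fun χ => χ ≠ φ))) (CForm.imp φ ψ))) :=
      AXProv.taut (by intro v; simp only [evalB_imp, evalB_and]; tauto)
    exact AXProv.mp t e2

/-- Maximal consistent sets. -/
def MCS (ex : CForm Φ → Prop) (T : Set (CForm Φ)) : Prop :=
  Con ex T ∧ ∀ S, Con ex S → T ⊆ S → S ⊆ T

lemma con_def {S : Set (CForm Φ)} : Con ex S ↔ ¬ TPrv (ex := ex) S CForm.fls := Iff.rfl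

variable {T : Set (CForm Φ)} (hT : MCS ex T)

include hT

lemma mcs_mem_of_tprv {φ : CForm Φ} (h : TPrv (ex := ex) T φ) : φ ∈ T := by
  by_contra hmem
  have hni : ¬ Con ex (insert φ T) := by
    intro hcon
    exact hmem (hT.2 (insert φ T) hcon (Set.subset_insert _ _) (Set.mem_insert φ T))
  rw [con_def, not_not] at hni
  have h1 : TPrv (ex := ex) T (CForm.imp φ CForm.fls) := tprv_insert hni
  have h2 : TPrv (ex := ex) T CForm.fls := tprv_mp h1 h
  exact hT.1 h2

lemma mcs_not_both {φ : CForm Φ} (h1 : φ ∈ T) (h2 : CForm.neg φ ∈ T) : False := by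
  refine hT.1 (tprv_mp (tprv_mp (tprv_of_prv ?_) (tprv_of_mem h1)) (tprv_of_mem h2))
  exact AXProv.taut (by intro v; simp only [evalB_imp, evalB_neg, evalB_fls]; tauto)

lemma mcs_mem_or_neg (φ : CForm Φ) : φ ∈ T ∨ CForm.neg φ ∈ T := by
  by_contra hc
  push_neg at hc
  have h1 : TPrv (ex := ex) T (CForm.imp φ CForm.fls) := by
    refine tprv_insert ?_
    by_contra hcon
    exact hc.1 (hT.2 (insert φ T) ((con_def (S := insert φ T)).2 hcon)
      (Set.subset_insert _ _) (Set.mem_insert φ T))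
  have h2 : TPrv (ex := ex) T (CForm.imp (CForm.neg φ) CForm.fls) := by
    refine tprv_insert ?_
    by_contra hcon
    exact hc.2 (hT.2 (insert (CForm.neg φ) T) ((con_def (S := insert (CForm.neg φ) T)).2 hcon)
      (Set.subset_insert _ _) (Set.mem_insert _ T))
  have t : Prv ex (CForm.imp (CForm.imp φ CForm.fls)
      (CForm.imp (CForm.imp (CForm.neg φ) CForm.fls) CForm.fls)) :=
    AXProv.taut (by intro v; simp only [evalB_imp, evalB_neg, evalB_fls]; tauto)
  exact hT.1 (tprv_mp (tprv_mp (tprv_of_prv t) h1) h2)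

lemma mcs_neg_mem_iff (φ : CForm Φ) : CForm.neg φ ∈ T ↔ φ ∉ T := by
  constructor
  · intro h hφ; exact mcs_not_both hT hφ h
  · intro h
    rcases mcs_mem_or_neg hT φ with h' | h'
    · exact absurd h' h
    · exact h'

lemma mcs_prv_mem {φ : CForm Φ} (h : Prv ex φ) : φ ∈ T :=
  mcs_mem_of_tprv hT (tprv_of_prv h)

lemma mcs_mp_mem {φ ψ : CForm Φ} (h1 : CForm.imp φ ψ ∈ T) (h2 : φ ∈ T) : ψ ∈ T :=
  mcs_mem_of_tprv hT (tprv_mp (tprv_of_mem h1) (tprv_of_mem h2))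

lemma mcs_or_elim {φ ψ : CForm Φ} (h : CForm.or φ ψ ∈ T) : φ ∈ T ∨ ψ ∈ T := by
  by_contra hc
  push_neg at hc
  have hn1 : CForm.neg φ ∈ T := (mcs_neg_mem_iff hT φ).2 hc.1
  have hn2 : CForm.neg ψ ∈ T := (mcs_neg_mem_iff hT ψ).2 hc.2
  have t : Prv ex (CForm.imp (CForm.or φ ψ)
      (CForm.imp (CForm.neg φ) (CForm.imp (CForm.neg ψ) CForm.fls))) :=
    AXProv.taut (by intro v; simp only [evalB_imp, evalB_or, evalB_neg, evalB_fls]; tauto)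
  exact hT.1 (tprv_mp (tprv_mp (tprv_mp (tprv_of_prv t) (tprv_of_mem h))
    (tprv_of_mem hn1)) (tprv_of_mem hn2))

lemma mcs_fls_not_mem : CForm.fls ∉ T := by
  intro h
  exact hT.1 (tprv_of_mem h)

lemma mcs_neg_closed {φ : CForm Φ} (h : φ ∉ T) : CForm.neg φ ∈ T :=
  (mcs_neg_mem_iff hT φ).2 h

omit hT

lemma lindenbaum {S : Set (CForm Φ)} (h : Con ex S) : ∃ T, S ⊆ T ∧ MCS ex T := by
  have hZ := zorn_subset_nonempty {U : Set (CForm Φ) | Con ex U} ?_ S h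
  · obtain ⟨m, hSm, hm⟩ := hZ
    refine ⟨m, hSm, hm.1, ?_⟩
    intro U hU hmU
    exact hm.2 hU hmU
  · intro c hcS hchain hcne
    refine ⟨⋃₀ c, ?_, fun s hs => Set.subset_sUnion_of_mem hs⟩
    intro hbad
    obtain ⟨l, hl, hp⟩ := hbad
    -- find a single member of the chain containing all of l
    have key : ∀ l' : List (CForm Φ), (∀ χ ∈ l', χ ∈ ⋃₀ c) → ∃ t ∈ c, ∀ χ ∈ l', χ ∈ t := by
      intro l'
      induction l' with
      | nil =>
        intro _
        obtain ⟨t, ht⟩ := hcne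
        exact ⟨t, ht, by simp⟩
      | cons χ l' ih =>
        intro hmem
        obtain ⟨t, htc, htl⟩ := ih (fun x hx => hmem x (List.mem_cons_of_mem χ hx))
        obtain ⟨t', ht'c, hχt'⟩ := hmem χ (List.mem_cons_self (a := χ) (l := l'))
        rcases eq_or_ne t t' with rfl | hne
        · exact ⟨t, htc, fun x hx => by
            rcases List.mem_cons.1 hx with rfl | hx
            · exact hχt'
            · exact htl x hx⟩
        · rcases hchain htc ht'c hne with hsub | hsub
          · exact ⟨t', ht'c, fun x hx => by
              rcases List.mem_cons.1 hx with rfl | hx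
              · exact hχt'
              · exact hsub (htl x hx)⟩
          · exact ⟨t, htc, fun x hx => by
              rcases List.mem_cons.1 hx with rfl | hx
              · exact hsub hχt'
              · exact htl x hx⟩
    obtain ⟨t, htc, htl⟩ := key l hl
    exact (hcS htc) ⟨l, htl, hp⟩

lemma con_singleton_neg {φ : CForm Φ} (h : ¬ Prv ex φ) : Con ex {CForm.neg φ} := by
  intro hbad
  obtain ⟨l, hl, hp⟩ := hbad
  have e : Prv ex (CForm.imp (CForm.neg φ) (conj l)) := by
    refine tautI ?_
    intro v hv
    rw [evalB_conj]
    intro χ hχ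
    have := hl χ hχ
    rw [Set.mem_singleton_iff] at this
    rw [this]
    exact hv
  have e2 : Prv ex (CForm.imp (CForm.neg φ) CForm.fls) := prv_cut e hp
  have t : Prv ex (CForm.imp (CForm.imp (CForm.neg φ) CForm.fls) φ) :=
    AXProv.taut (by intro v; simp only [evalB_imp, evalB_neg, evalB_fls]; tauto)
  exact h (AXProv.mp t e2)

end ProofSystem


/-! ### Valuations over a finite set of formulas -/

noncomputable section CanonCore

open Classical

variable (Γ : Finset (CForm Φ))

/-- Boolean valuations of the members of `Γ`. -/
abbrev Val := {ψ : CForm Φ // ψ ∈ Γ} → Bool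

def lit (g : Val Γ) (x : {ψ : CForm Φ // ψ ∈ Γ}) : CForm Φ :=
  if g x then x.1 else CForm.neg x.1

def lits (g : Val Γ) : List (CForm Φ) := Γ.attach.toList.map (lit Γ g)

/-- The conjunction of the literals of `g`. -/
def hatg (g : Val Γ) : CForm Φ := conj (lits Γ g)

/-- The disjunction of the valuations in `A`. -/
def fA (A : Finset (Val Γ)) : CForm Φ := disj (A.toList.map (hatg Γ))

/-- The valuation pattern of a propositional model. -/
def pat (v : CForm Φ → Prop) : Val Γ :=
  fun x => if CForm.evalB v x.1 then true else false

lemma pat_true_iff (v : CForm Φ → Prop) (x : {ψ : CForm Φ // ψ ∈ Γ}) :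
    pat Γ v x = true ↔ CForm.evalB v x.1 := by
  by_cases h : CForm.evalB v x.1
  · simp [pat, h]
  · simp [pat, h]

lemma evalB_hatg (v : CForm Φ → Prop) (g : Val Γ) :
    CForm.evalB v (hatg Γ g) ↔ g = pat Γ v := by
  rw [hatg, evalB_conj]
  constructor
  · intro h
    funext x
    have hx : lit Γ g x ∈ lits Γ g :=
      List.mem_map.2 ⟨x, Finset.mem_toList.2 (Finset.mem_attach _ _), rfl⟩
    have := h _ hx
    by_cases hg : g x
    · rw [lit, if_pos hg] at this
      rw [hg, eq_comm, pat_true_iff]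
      exact this
    · rw [lit, if_neg hg, evalB_neg] at this
      simp only [Bool.not_eq_true] at hg
      rw [hg, eq_comm]
      simp [pat, this]
  · rintro rfl χ hχ
    obtain ⟨x, _, rfl⟩ := List.mem_map.1 hχ
    by_cases hv : CForm.evalB v x.1
    · rw [lit, if_pos (by rw [pat_true_iff]; exact hv)]
      exact hv
    · rw [lit, if_neg (by rw [pat_true_iff]; exact hv), evalB_neg]
      exact hv

lemma evalB_fA (v : CForm Φ → Prop) (A : Finset (Val Γ)) :
    CForm.evalB v (fA Γ A) ↔ pat Γ v ∈ A := by
  rw [fA, evalB_disj]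
  constructor
  · rintro ⟨χ, hχ, hv⟩
    obtain ⟨g, hg, rfl⟩ := List.mem_map.1 hχ
    rw [evalB_hatg] at hv
    rw [← hv]
    exact Finset.mem_toList.1 hg
  · intro h
    exact ⟨hatg Γ (pat Γ v), List.mem_map.2 ⟨pat Γ v, Finset.mem_toList.2 h, rfl⟩,
      (evalB_hatg Γ v _).2 rfl⟩

variable {ex : CForm Φ → Prop}

/-- The canonical selection function: `g ∈ CC Γ T A` iff
`¬((⋁ A) > ¬ĝ) ∈ T`. -/
def CC (T : Set (CForm Φ)) (A : Finset (Val Γ)) : Finset (Val Γ) :=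
  Finset.univ.filter (fun g => CForm.cf (fA Γ A) (CForm.neg (hatg Γ g)) ∉ T)

lemma mem_CC {T : Set (CForm Φ)} {A : Finset (Val Γ)} {g : Val Γ} :
    g ∈ CC Γ T A ↔ CForm.cf (fA Γ A) (CForm.neg (hatg Γ g)) ∉ T := by
  simp [CC]

variable {Γ}
variable {T : Set (CForm Φ)} (hT : MCS ex T)

include hT

/-- If `(⋁A) > β` is provably entailed pointwise on `CC`, it is in `T`. -/
lemma cf_mem_of_forall {A : Finset (Val Γ)} {β : CForm Φ}
    (h : ∀ g ∈ CC Γ T A, ∀ v : CForm Φ → Prop, CForm.evalB v (hatg Γ g) → CForm.evalB v β) :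
    CForm.cf (fA Γ A) β ∈ T := by
  classical
  set Bad : Finset (Val Γ) :=
    Finset.univ.filter (fun g => CForm.cf (fA Γ A) (CForm.neg (hatg Γ g)) ∈ T) with hBad
  set l : List (CForm Φ) := Bad.toList.map (fun g => CForm.neg (hatg Γ g)) with hl
  have hconj : CForm.cf (fA Γ A) (conj l) ∈ T := by
    have : ∀ l' : List (CForm Φ), (∀ χ ∈ l', CForm.cf (fA Γ A) χ ∈ T) →
        CForm.cf (fA Γ A) (conj l') ∈ T := by
      intro l'
      induction l' with
      | nil =>
        intro _
        refine mcs_prv_mem hT ?_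
        refine AXProv.mp (AXProv.ra2 (tautI ?_)) (AXProv.a1 (fA Γ A))
        intro v _
        exact (evalB_tr v).2 trivial
      | cons χ l' ih =>
        intro hmem
        have h1 : CForm.cf (fA Γ A) χ ∈ T := hmem χ (List.mem_cons_self)
        have h2 : CForm.cf (fA Γ A) (conj l') ∈ T :=
          ih (fun x hx => hmem x (List.mem_cons_of_mem _ hx))
        have hand : CForm.and (CForm.cf (fA Γ A) χ) (CForm.cf (fA Γ A) (conj l')) ∈ T := by
          refine mcs_mp_mem hT (mcs_mp_mem hT (mcs_prv_mem hT (AXProv.taut ?_)) h1) h2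
          intro v
          simp only [evalB_imp, evalB_and]
          tauto
        exact mcs_mp_mem hT (mcs_prv_mem hT (AXProv.a2 _ _ _)) hand
    refine this l ?_
    intro χ hχ
    obtain ⟨g, hg, rfl⟩ := List.mem_map.1 hχ
    have := Finset.mem_toList.1 hg
    rw [hBad, Finset.mem_filter] at this
    exact this.2
  refine mcs_mp_mem hT (mcs_prv_mem hT (AXProv.ra2 (tautI ?_))) hconj
  intro v hv
  rw [evalB_conj] at hv
  by_cases hp : pat Γ v ∈ CC Γ T A
  · exact h _ hp v ((evalB_hatg Γ v _).2 rfl)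
  · exfalso
    have hpB : pat Γ v ∈ Bad := by
      rw [hBad, Finset.mem_filter]
      refine ⟨Finset.mem_univ _, ?_⟩
      rw [mem_CC, not_not] at hp
      exact hp
    have := hv (CForm.neg (hatg Γ (pat Γ v)))
      (List.mem_map.2 ⟨pat Γ v, Finset.mem_toList.2 hpB, rfl⟩)
    rw [evalB_neg] at this
    exact this ((evalB_hatg Γ v _).2 rfl)

/-- If `(⋁A) > β ∈ T` then every `g ∈ CC` is propositionally compatible with `β`. -/
lemma cf_mem_excl {A : Finset (Val Γ)} {β : CForm Φ} {g : Val Γ}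
    (h : CForm.cf (fA Γ A) β ∈ T) (hg : g ∈ CC Γ T A)
    (ht : ∀ v : CForm Φ → Prop, CForm.evalB v β → ¬ CForm.evalB v (hatg Γ g)) : False := by
  have : CForm.cf (fA Γ A) (CForm.neg (hatg Γ g)) ∈ T :=
    mcs_mp_mem hT (mcs_prv_mem hT (AXProv.ra2 (tautI (fun v hv => (evalB_neg v _).2 (ht v hv))))) h
  exact (mem_CC Γ).1 hg this

lemma CC_subset {A : Finset (Val Γ)} {g : Val Γ} (hg : g ∈ CC Γ T A) : g ∈ A := by
  by_contra hgA
  refine (mem_CC Γ).1 hg ?_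
  refine mcs_prv_mem hT (AXProv.mp (AXProv.ra2 (tautI ?_)) (AXProv.a1 _))
  intro v hv
  rw [evalB_fA] at hv
  rw [evalB_neg, evalB_hatg]
  rintro rfl
  exact hgA hv

lemma cf_transfer {α : CForm Φ} {A : Finset (Val Γ)} {β : CForm Φ}
    (ht : ∀ v : CForm Φ → Prop, CForm.evalB v α ↔ CForm.evalB v (fA Γ A)) :
    (CForm.cf α β ∈ T ↔ CForm.cf (fA Γ A) β ∈ T) := by
  constructor
  · intro h
    exact mcs_mp_mem hT (mcs_prv_mem hT (AXProv.ra1 (tautIff ht))) h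
  · intro h
    exact mcs_mp_mem hT (mcs_prv_mem hT (AXProv.ra1 (tautIff (fun v => (ht v).symm)))) h

/-- L-min : restriction of the selection to smaller antecedent sets. -/
lemma CC_min {A B : Finset (Val Γ)} {g : Val Γ} (hAB : A ⊆ B)
    (hg : g ∈ CC Γ T B) (hgA : g ∈ A) : g ∈ CC Γ T A := by
  by_contra hc
  rw [mem_CC, not_not] at hc
  -- X := fA A, Y := fA B ∧ ¬ fA A
  set ψ : CForm Φ := CForm.neg (hatg Γ g)
  have hY : Prv ex (CForm.cf (CForm.and (fA Γ B) (CForm.neg (fA Γ A))) ψ) := by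
    refine AXProv.mp (AXProv.ra2 (tautI ?_)) (AXProv.a1 _)
    intro v hv
    rw [evalB_and, evalB_neg, evalB_fA, evalB_fA] at hv
    rw [evalB_neg, evalB_hatg]
    rintro rfl
    exact hv.2 hgA
  have hand : CForm.and (CForm.cf (fA Γ A) ψ)
      (CForm.cf (CForm.and (fA Γ B) (CForm.neg (fA Γ A))) ψ) ∈ T := by
    refine mcs_mp_mem hT (mcs_mp_mem hT (mcs_prv_mem hT (AXProv.taut ?_)) hc)
      (mcs_prv_mem hT hY)
    intro v; simp only [evalB_imp, evalB_and]; tauto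
  have hor : CForm.cf (CForm.or (fA Γ A) (CForm.and (fA Γ B) (CForm.neg (fA Γ A)))) ψ ∈ T :=
    mcs_mp_mem hT (mcs_prv_mem hT (AXProv.a4 _ _ _)) hand
  have hfin : CForm.cf (fA Γ B) ψ ∈ T := by
    refine mcs_mp_mem hT (mcs_prv_mem hT (AXProv.ra1 (tautIff ?_))) hor
    intro v
    simp only [evalB_or, evalB_and, evalB_neg, evalB_fA]
    constructor
    · rintro (h | h)
      · exact hAB h
      · exact h.1
    · intro h
      by_cases hA : pat Γ v ∈ A
      · exact Or.inl hA
      · exact Or.inr ⟨h, hA⟩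
  exact (mem_CC Γ).1 hg hfin

/-- The squeeze lemma : if `CC B ⊆ A ⊆ B` then `CC A = CC B`. -/
lemma CC_squeeze {A B : Finset (Val Γ)} (hCB : ∀ g ∈ CC Γ T B, g ∈ A) (hAB : A ⊆ B) :
    CC Γ T A = CC Γ T B := by
  classical
  have hfAB : CForm.cf (fA Γ B) (fA Γ A) ∈ T := by
    refine cf_mem_of_forall hT ?_
    intro g hg v hv
    rw [evalB_hatg] at hv
    rw [evalB_fA, ← hv]
    exact hCB g hg
  ext g
  constructor
  · -- CM : CC A ⊆ CC B
    intro hg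
    by_contra hc
    rw [mem_CC, not_not] at hc
    set ψ : CForm Φ := CForm.neg (hatg Γ g)
    have hand : CForm.and (CForm.cf (fA Γ B) (fA Γ A)) (CForm.cf (fA Γ B) ψ) ∈ T := by
      refine mcs_mp_mem hT (mcs_mp_mem hT (mcs_prv_mem hT (AXProv.taut ?_)) hfAB) hc
      intro v; simp only [evalB_imp, evalB_and]; tauto
    have h3 : CForm.cf (CForm.and (fA Γ B) (fA Γ A)) ψ ∈ T :=
      mcs_mp_mem hT (mcs_prv_mem hT (AXProv.a3 _ _ _)) hand
    have h4 : CForm.cf (fA Γ A) ψ ∈ T := by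
      refine mcs_mp_mem hT (mcs_prv_mem hT (AXProv.ra1 (tautIff ?_))) h3
      intro v
      rw [evalB_and, evalB_fA, evalB_fA]
      constructor
      · rintro ⟨_, h⟩; exact h
      · intro h; exact ⟨hAB h, h⟩
    exact (mem_CC Γ).1 hg h4
  · -- CUT : CC B ⊆ CC A
    intro hg
    by_contra hc
    rw [mem_CC, not_not] at hc
    set ψ : CForm Φ := CForm.neg (hatg Γ g)
    set χ : CForm Φ := CForm.or (CForm.neg (fA Γ A)) ψ
    have h1 : CForm.cf (CForm.and (fA Γ B) (fA Γ A)) ψ ∈ T := by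
      refine mcs_mp_mem hT (mcs_prv_mem hT (AXProv.ra1 (tautIff ?_))) hc
      intro v
      rw [evalB_and, evalB_fA, evalB_fA]
      constructor
      · intro h; exact ⟨hAB h, h⟩
      · rintro ⟨_, h⟩; exact h
    have h2 : CForm.cf (CForm.and (fA Γ B) (fA Γ A)) χ ∈ T := by
      refine mcs_mp_mem hT (mcs_prv_mem hT (AXProv.ra2 (tautI ?_))) h1
      intro v hv
      rw [evalB_or]
      exact Or.inr hv
    have h3 : Prv ex (CForm.cf (CForm.and (fA Γ B) (CForm.neg (fA Γ A))) χ) := by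
      refine AXProv.mp (AXProv.ra2 (tautI ?_)) (AXProv.a1 _)
      intro v hv
      rw [evalB_and, evalB_neg] at hv
      rw [evalB_or, evalB_neg]
      exact Or.inl hv.2
    have hand : CForm.and (CForm.cf (CForm.and (fA Γ B) (fA Γ A)) χ)
        (CForm.cf (CForm.and (fA Γ B) (CForm.neg (fA Γ A))) χ) ∈ T := by
      refine mcs_mp_mem hT (mcs_mp_mem hT (mcs_prv_mem hT (AXProv.taut ?_)) h2)
        (mcs_prv_mem hT h3)
      intro v; simp only [evalB_imp, evalB_and]; tauto
    have h4 : CForm.cf (CForm.or (CForm.and (fA Γ B) (fA Γ A))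
        (CForm.and (fA Γ B) (CForm.neg (fA Γ A)))) χ ∈ T :=
      mcs_mp_mem hT (mcs_prv_mem hT (AXProv.a4 _ _ _)) hand
    have h5 : CForm.cf (fA Γ B) χ ∈ T := by
      refine mcs_mp_mem hT (mcs_prv_mem hT (AXProv.ra1 (tautIff ?_))) h4
      intro v
      simp only [evalB_or, evalB_and, evalB_neg]
      tauto
    have hand2 : CForm.and (CForm.cf (fA Γ B) (fA Γ A)) (CForm.cf (fA Γ B) χ) ∈ T := by
      refine mcs_mp_mem hT (mcs_mp_mem hT (mcs_prv_mem hT (AXProv.taut ?_)) hfAB) h5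
      intro v; simp only [evalB_imp, evalB_and]; tauto
    have h6 : CForm.cf (fA Γ B) (CForm.and (fA Γ A) χ) ∈ T :=
      mcs_mp_mem hT (mcs_prv_mem hT (AXProv.a2 _ _ _)) hand2
    have h7 : CForm.cf (fA Γ B) ψ ∈ T := by
      refine mcs_mp_mem hT (mcs_prv_mem hT (AXProv.ra2 (tautI ?_))) h6
      intro v hv
      rw [evalB_and, evalB_or, evalB_neg] at hv
      rcases hv.2 with h | h
      · exact absurd hv.1 h
      · exact h
    exact (mem_CC Γ).1 hg h7

/-- Extension lemma for the canonical preorder construction. -/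
lemma CC_extend {G D : Finset (Val Γ)} {g : Val Γ}
    (hgG : g ∈ CC Γ T G) (hgD : g ∈ D) (hgnD : g ∉ CC Γ T D) :
    ∃ x, x ∈ CC Γ T (G ∪ D) ∧ x ∉ G := by
  by_contra hc
  push_neg at hc
  have hsq : CC Γ T G = CC Γ T (G ∪ D) :=
    CC_squeeze hT (fun x hx => hc x hx) Finset.subset_union_left
  have : g ∈ CC Γ T (G ∪ D) := hsq ▸ hgG
  exact hgnD (CC_min hT Finset.subset_union_right this hgD)

/-- Emptiness is monotone downwards. -/
lemma CC_empty_mono {A B : Finset (Val Γ)} (hBA : B ⊆ A) (hA : CC Γ T A = ∅) :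
    CC Γ T B = ∅ := by
  classical
  have hfls : CForm.cf (fA Γ A) CForm.fls ∈ T := by
    refine cf_mem_of_forall hT ?_
    intro g hg
    rw [hA] at hg
    exact absurd hg (Finset.notMem_empty g)
  have h1 : CForm.cf (fA Γ A) (fA Γ B) ∈ T := by
    refine mcs_mp_mem hT (mcs_prv_mem hT (AXProv.ra2 (tautI ?_))) hfls
    intro v hv
    exact absurd hv (evalB_fls v).1
  have hand : CForm.and (CForm.cf (fA Γ A) (fA Γ B)) (CForm.cf (fA Γ A) CForm.fls) ∈ T := by
    refine mcs_mp_mem hT (mcs_mp_mem hT (mcs_prv_mem hT (AXProv.taut ?_)) h1) hfls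
    intro v; simp only [evalB_imp, evalB_and]; tauto
  have h2 : CForm.cf (CForm.and (fA Γ A) (fA Γ B)) CForm.fls ∈ T :=
    mcs_mp_mem hT (mcs_prv_mem hT (AXProv.a3 _ _ _)) hand
  have h3 : CForm.cf (fA Γ B) CForm.fls ∈ T := by
    refine mcs_mp_mem hT (mcs_prv_mem hT (AXProv.ra1 (tautIff ?_))) h2
    intro v
    rw [evalB_and, evalB_fA, evalB_fA]
    constructor
    · rintro ⟨_, h⟩; exact h
    · intro h; exact ⟨hBA h, h⟩
  ext g
  simp only [Finset.notMem_empty, iff_false]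
  intro hg
  refine (mem_CC Γ).1 hg ?_
  refine mcs_mp_mem hT (mcs_prv_mem hT (AXProv.ra2 (tautI ?_))) h3
  intro v hv
  exact absurd hv (evalB_fls v).1

/-- Members of `CC` have consistent literal sets. -/
lemma CC_con {A : Finset (Val Γ)} {g : Val Γ} (hg : g ∈ CC Γ T A) :
    Con ex {χ | χ ∈ lits Γ g} := by
  intro hbad
  obtain ⟨l, hl, hp⟩ := hbad
  have e : Prv ex (CForm.imp (hatg Γ g) (conj l)) := by
    refine tautI ?_
    intro v hv
    rw [hatg, evalB_conj] at hv
    rw [evalB_conj]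
    exact fun χ hχ => hv χ (hl χ hχ)
  have e2 : Prv ex (CForm.imp (hatg Γ g) CForm.fls) := prv_cut e hp
  have e3 : Prv ex (CForm.imp (fA Γ A) (CForm.neg (hatg Γ g))) := by
    have t : Prv ex (CForm.imp (CForm.imp (hatg Γ g) CForm.fls)
        (CForm.imp (fA Γ A) (CForm.neg (hatg Γ g)))) :=
      AXProv.taut (by intro v; simp only [evalB_imp, evalB_neg, evalB_fls]; tauto)
    exact AXProv.mp t e2
  refine (mem_CC Γ).1 hg ?_
  exact mcs_prv_mem hT (AXProv.mp (AXProv.ra2 e3) (AXProv.a1 _))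

omit hT

variable (Γ)

/-- The valuation associated with a maximal consistent set. -/
def gOf (T' : Set (CForm Φ)) : Val Γ := fun x => if x.1 ∈ T' then true else false

lemma gOf_eq_of_lits_subset {T' : Set (CForm Φ)} (hT' : MCS ex T') {g : Val Γ}
    (h : ∀ χ ∈ lits Γ g, χ ∈ T') : gOf Γ T' = g := by
  funext x
  have hx : lit Γ g x ∈ lits Γ g :=
    List.mem_map.2 ⟨x, Finset.mem_toList.2 (Finset.mem_attach _ _), rfl⟩
  by_cases hg : g x
  · rw [lit, if_pos hg] at hx
    rw [hg, gOf, if_pos (h _ hx)]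
  · rw [lit, if_neg hg] at hx
    simp only [Bool.not_eq_true] at hg
    rw [hg, gOf, if_neg ?_]
    intro hmem
    exact mcs_not_both hT' hmem (h _ hx)

variable {Γ}

include hT

lemma hatg_gOf_mem : hatg Γ (gOf Γ T) ∈ T := by
  have : ∀ l : List (CForm Φ), (∀ χ ∈ l, χ ∈ T) → conj l ∈ T := by
    intro l
    induction l with
    | nil =>
      intro _
      exact mcs_prv_mem hT (AXProv.taut (fun v => (evalB_tr v).2 trivial))
    | cons χ l ih =>
      intro h
      have h1 : χ ∈ T := h χ (List.mem_cons_self)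
      have h2 : conj l ∈ T := ih (fun x hx => h x (List.mem_cons_of_mem _ hx))
      refine mcs_mp_mem hT (mcs_mp_mem hT (mcs_prv_mem hT (AXProv.taut ?_)) h1) h2
      intro v; simp only [evalB_imp, evalB_and]; tauto
  refine this _ ?_
  intro χ hχ
  obtain ⟨x, _, rfl⟩ := List.mem_map.1 hχ
  by_cases hx : x.1 ∈ T
  · rw [lit, gOf, if_pos (by simp [hx])]
    exact hx
  · rw [lit, gOf, if_neg (by simp [hx])]
    exact mcs_neg_closed hT hx

lemma hatg_ne_mem {h : Val Γ} (hne : h ≠ gOf Γ T) : CForm.neg (hatg Γ h) ∈ T := by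
  have key : Prv ex (CForm.imp (hatg Γ (gOf Γ T)) (CForm.neg (hatg Γ h))) := by
    refine tautI ?_
    intro v hv
    rw [evalB_hatg] at hv
    rw [evalB_neg, evalB_hatg]
    intro hc
    exact hne (hc.trans hv.symm)
  exact mcs_mem_of_tprv hT (tprv_mp (tprv_of_prv key) (tprv_of_mem (hatg_gOf_mem (Γ := Γ) hT)))

/-- Centering : if the valuation of `T` belongs to `A`, then `CC A = {gOf T}`. -/
lemma CC_center {A : Finset (Val Γ)} (hA : gOf Γ T ∈ A) :
    CC Γ T A = {gOf Γ T} := by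
  classical
  have hfAT : fA Γ A ∈ T := by
    refine mcs_mem_of_tprv hT (tprv_mp (tprv_of_prv (tautI ?_)) (tprv_of_mem (hatg_gOf_mem (Γ := Γ) hT)))
    intro v hv
    rw [evalB_hatg] at hv
    rw [evalB_fA, ← hv]
    exact hA
  have ha6 : ∀ ψ : CForm Φ, (ψ ∈ T ↔ CForm.cf (fA Γ A) ψ ∈ T) := by
    intro ψ
    have h6 : CForm.iff ψ (CForm.cf (fA Γ A) ψ) ∈ T :=
      mcs_mp_mem hT (mcs_prv_mem hT (AXProv.a6 _ _)) hfAT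
    constructor
    · intro h
      refine mcs_mp_mem hT ?_ h
      refine mcs_mem_of_tprv hT (tprv_mp (tprv_of_prv (AXProv.taut ?_)) (tprv_of_mem h6))
      intro v; simp only [evalB_imp, evalB_iff]; tauto
    · intro h
      refine mcs_mp_mem hT ?_ h
      refine mcs_mem_of_tprv hT (tprv_mp (tprv_of_prv (AXProv.taut ?_)) (tprv_of_mem h6))
      intro v; simp only [evalB_imp, evalB_iff]; tauto
  ext h
  rw [mem_CC, Finset.mem_singleton]
  constructor
  · intro hmem
    by_contra hne
    exact hmem ((ha6 _).1 (hatg_ne_mem hT hne))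
  · rintro rfl
    intro hmem
    exact mcs_not_both hT (hatg_gOf_mem hT) ((ha6 _).2 hmem)

/-- With A7, the selection is a singleton or empty. -/
lemma CC_singleton_of_A7
    (hax : ∀ φ ψ1 ψ2 : CForm Φ, Prv ex (CForm.imp (CForm.cf φ (CForm.or ψ1 ψ2))
      (CForm.or (CForm.cf φ ψ1) (CForm.cf φ ψ2))))
    {A : Finset (Val Γ)} {g h : Val Γ} (hg : g ∈ CC Γ T A) (hh : h ∈ CC Γ T A) :
    g = h := by
  by_contra hne
  have h1 : CForm.cf (fA Γ A) (CForm.or (CForm.neg (hatg Γ g)) (CForm.neg (hatg Γ h))) ∈ T := by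
    refine mcs_prv_mem hT (AXProv.mp (AXProv.ra2 (tautI ?_)) (AXProv.a1 _))
    intro v _
    rw [evalB_or, evalB_neg, evalB_neg, evalB_hatg, evalB_hatg]
    by_cases hc : g = pat Γ v
    · refine Or.inr ?_
      rw [← hc]
      exact fun hc2 => hne (hc2 ▸ rfl)
    · exact Or.inl hc
  have h2 : CForm.or (CForm.cf (fA Γ A) (CForm.neg (hatg Γ g)))
      (CForm.cf (fA Γ A) (CForm.neg (hatg Γ h))) ∈ T :=
    mcs_mp_mem hT (mcs_prv_mem hT (hax _ _ _)) h1
  rcases mcs_or_elim hT h2 with h3 | h3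
  · exact (mem_CC Γ).1 hg h3
  · exact (mem_CC Γ).1 hh h3

end CanonCore


/-! ### More MCS lemmas and the extension function -/

noncomputable section CanonModels

open Classical

variable {ex : CForm Φ → Prop}

lemma mcs_and_iff {T : Set (CForm Φ)} (hT : MCS ex T) (φ ψ : CForm Φ) :
    CForm.and φ ψ ∈ T ↔ (φ ∈ T ∧ ψ ∈ T) := by
  constructor
  · intro h
    constructor
    · refine mcs_mp_mem hT (mcs_prv_mem hT (AXProv.taut ?_)) h
      intro v; simp only [evalB_imp, evalB_and]; tauto
    · refine mcs_mp_mem hT (mcs_prv_mem hT (AXProv.taut ?_)) h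
      intro v; simp only [evalB_imp, evalB_and]; tauto
  · rintro ⟨h1, h2⟩
    refine mcs_mp_mem hT (mcs_mp_mem hT (mcs_prv_mem hT (AXProv.taut ?_)) h1) h2
    intro v; simp only [evalB_imp, evalB_and]; tauto

variable (ex)

/-- A valuation is good if its literals extend to a maximal consistent set. -/
def Good (Γ : Finset (CForm Φ)) (g : Val Γ) : Prop :=
  ∃ T, MCS ex T ∧ ∀ χ ∈ lits Γ g, χ ∈ T

/-- A maximal consistent extension of the literals of `g` (junk if not good). -/
def extT (Γ : Finset (CForm Φ)) (g : Val Γ) : Set (CForm Φ) :=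
  if h : Good ex Γ g then h.choose else ∅

variable {ex}
variable {Γ : Finset (CForm Φ)}

lemma good_of_con {g : Val Γ} (h : Con ex {χ | χ ∈ lits Γ g}) : Good ex Γ g := by
  obtain ⟨T, hsub, hmcs⟩ := lindenbaum h
  exact ⟨T, hmcs, fun χ hχ => hsub hχ⟩

lemma extT_mcs {g : Val Γ} (h : Good ex Γ g) : MCS ex (extT ex Γ g) := by
  rw [extT, dif_pos h]
  exact h.choose_spec.1

lemma extT_lits {g : Val Γ} (h : Good ex Γ g) : ∀ χ ∈ lits Γ g, χ ∈ extT ex Γ g := by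
  rw [extT, dif_pos h]
  exact h.choose_spec.2

lemma extT_gOf {g : Val Γ} (h : Good ex Γ g) : gOf Γ (extT ex Γ g) = g :=
  gOf_eq_of_lits_subset Γ (extT_mcs h) (extT_lits h)

lemma good_of_CC {T : Set (CForm Φ)} (hT : MCS ex T) {A : Finset (Val Γ)} {g : Val Γ}
    (hg : g ∈ CC Γ T A) : Good ex Γ g :=
  good_of_con (CC_con hT hg)

/-- Coordinates of good valuations read membership in the chosen extension. -/
lemma good_coord {g : Val Γ} (h : Good ex Γ g) {ψ : CForm Φ} (hψ : ψ ∈ Γ) :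
    (g ⟨ψ, hψ⟩ = true ↔ ψ ∈ extT ex Γ g) := by
  conv_lhs => rw [← extT_gOf h]
  rw [gOf]
  by_cases hmem : ψ ∈ extT ex Γ g <;> simp [hmem]

/-! ### Pair lemmas (for the total-order canonical model) -/

section Pairs

variable {T : Set (CForm Φ)} (hT : MCS ex T)
include hT

lemma CC_pair_trans
    (hax : ∀ φ ψ1 ψ2 : CForm Φ, Prv ex (CForm.imp (CForm.cf φ (CForm.or ψ1 ψ2))
      (CForm.or (CForm.cf φ ψ1) (CForm.cf φ ψ2))))
    {a b c : Val Γ}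
    (hab : CC Γ T {a, b} = {a}) (hbc : CC Γ T {b, c} = {b}) :
    CC Γ T {a, c} = {a} := by
  classical
  have haposs : a ∈ CC Γ T {a} := by
    have ha : a ∈ CC Γ T {a, b} := by rw [hab]; exact Finset.mem_singleton_self a
    exact CC_min hT (by intro x hx; rw [Finset.mem_singleton] at hx; rw [hx]; exact Finset.mem_insert_self _ _) ha (Finset.mem_singleton_self a)
  have hU : (CC Γ T ({a, b, c} : Finset (Val Γ))).Nonempty := by
    by_contra hne
    rw [Finset.not_nonempty_iff_eq_empty] at hne
    have : CC Γ T {a} = ∅ := by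
      refine CC_empty_mono hT ?_ hne
      intro x hx
      rw [Finset.mem_singleton] at hx
      rw [hx]
      exact Finset.mem_insert_self _ _
    rw [this] at haposs
    exact Finset.notMem_empty a haposs
  obtain ⟨m, hm⟩ := hU
  have hmU : m ∈ ({a, b, c} : Finset (Val Γ)) := CC_subset hT hm
  have hma : m = a := by
    simp only [Finset.mem_insert, Finset.mem_singleton] at hmU
    rcases hmU with rfl | rfl | rfl
    · rfl
    · -- m = b : b ∈ CC {a,b,c} so b ∈ CC {a,b} = {a}
      have : m ∈ CC Γ T {a, m} := by
        refine CC_min hT ?_ hm (by simp)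
        intro x hx
        simp only [Finset.mem_insert, Finset.mem_singleton] at hx ⊢
        tauto
      rw [hab] at this
      rw [Finset.mem_singleton] at this
      exact this
    · -- m = c : c ∈ CC {b,c} = {b} so c = b, then b ∈ CC{a,b} = {a}
      have h1 : m ∈ CC Γ T {b, m} := by
        refine CC_min hT ?_ hm (by simp)
        intro x hx
        simp only [Finset.mem_insert, Finset.mem_singleton] at hx ⊢
        tauto
      rw [hbc] at h1
      rw [Finset.mem_singleton] at h1
      subst h1
      have h2 : m ∈ CC Γ T {a, m} := by
        refine CC_min hT ?_ hm (by simp)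
        intro x hx
        simp only [Finset.mem_insert, Finset.mem_singleton] at hx ⊢
        tauto
      rw [hab] at h2
      rw [Finset.mem_singleton] at h2
      exact h2
  subst hma
  have hac : m ∈ CC Γ T {m, c} := by
    refine CC_min hT ?_ hm (by simp)
    intro x hx
    simp only [Finset.mem_insert, Finset.mem_singleton] at hx ⊢
    tauto
  ext x
  rw [Finset.mem_singleton]
  constructor
  · intro hx
    exact CC_singleton_of_A7 hT hax hx hac
  · rintro rfl
    exact hac

lemma CC_pair_total
    (hax : ∀ φ ψ1 ψ2 : CForm Φ, Prv ex (CForm.imp (CForm.cf φ (CForm.or ψ1 ψ2))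
      (CForm.or (CForm.cf φ ψ1) (CForm.cf φ ψ2))))
    {a b : Val Γ} (ha : a ∈ CC Γ T {a}) :
    CC Γ T {a, b} = {a} ∨ CC Γ T {a, b} = {b} := by
  classical
  have hne : (CC Γ T ({a, b} : Finset (Val Γ))).Nonempty := by
    by_contra hcon
    rw [Finset.not_nonempty_iff_eq_empty] at hcon
    have : CC Γ T {a} = ∅ := by
      refine CC_empty_mono hT ?_ hcon
      intro x hx
      rw [Finset.mem_singleton] at hx
      rw [hx]
      exact Finset.mem_insert_self _ _
    rw [this] at ha
    exact Finset.notMem_empty a ha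
  obtain ⟨m, hm⟩ := hne
  have hsing : CC Γ T ({a, b} : Finset (Val Γ)) = {m} := by
    ext x
    rw [Finset.mem_singleton]
    constructor
    · intro hx
      exact CC_singleton_of_A7 hT hax hx hm
    · rintro rfl
      exact hm
  have hmab : m ∈ ({a, b} : Finset (Val Γ)) := CC_subset hT hm
  simp only [Finset.mem_insert, Finset.mem_singleton] at hmab
  rcases hmab with rfl | rfl
  · exact Or.inl hsing
  · exact Or.inr hsing

end Pairs

end CanonModels


/-! ### Sub-closed sets of formulas -/

def SubCl (Γ : Finset (CForm Φ)) : Prop :=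
  (∀ φ ψ : CForm Φ, CForm.and φ ψ ∈ Γ → φ ∈ Γ ∧ ψ ∈ Γ) ∧
  (∀ φ : CForm Φ, CForm.neg φ ∈ Γ → φ ∈ Γ) ∧
  (∀ φ ψ : CForm Φ, CForm.cf φ ψ ∈ Γ → φ ∈ Γ ∧ ψ ∈ Γ)

/-! ### The canonical model for AX⁺ (strict total orders) -/

noncomputable section ModelII

open Classical

variable (ex : CForm Φ → Prop) (Γ : Finset (CForm Φ))

def PII (x a : Val Γ) : Prop :=
  a ∈ CC Γ (extT ex Γ x) {a} ∧ a ≠ x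

def RII (x a b : Val Γ) : Prop :=
  a = x ∨ (Good ex Γ x ∧ PII ex Γ x a ∧ PII ex Γ x b ∧
    (a = b ∨ CC Γ (extT ex Γ x) {a, b} = {a}))

variable (hax : ∀ φ ψ1 ψ2 : CForm Φ, Prv ex (CForm.imp (CForm.cf φ (CForm.or ψ1 ψ2))
      (CForm.or (CForm.cf φ ψ1) (CForm.cf φ ψ2))))

@[reducible] def MII : CStruct Φ where
  World := Val Γ
  worldFin := inferInstance
  val := fun w p => ∃ h : CForm.atom p ∈ Γ, w ⟨CForm.atom p, h⟩ = true
  R := RII ex Γ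
  self_mem := fun w => ⟨w, Or.inl rfl⟩
  refl_on := by
    rintro w u ⟨v, hv⟩
    rcases hv with rfl | ⟨hg, hpu, hpv, _⟩
    · exact Or.inl rfl
    · exact Or.inr ⟨hg, hpu, hpu, Or.inl rfl⟩
  trans_on := by
    rintro w u v z _ _ _ h1 h2
    rcases h1 with rfl | ⟨hg, hpu, hpv, h⟩
    · exact Or.inl rfl
    rcases h2 with rfl | ⟨_, _, hpz, h'⟩
    · exact absurd rfl hpv.2
    refine Or.inr ⟨hg, hpu, hpz, ?_⟩
    rcases h with rfl | hab
    · exact h'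
    rcases h' with rfl | hbc
    · exact Or.inr hab
    · exact Or.inr (CC_pair_trans (extT_mcs hg) hax hab hbc)
  centered := by
    intro w u hu
    refine ⟨Or.inl rfl, ?_⟩
    rintro (rfl | ⟨_, _, hpw, _⟩)
    · exact hu rfl
    · exact hpw.2 rfl

lemma MII_inW (x y : Val Γ) :
    (MII ex Γ hax).inW x y ↔ (y = x ∨ (Good ex Γ x ∧ PII ex Γ x y)) := by
  constructor
  · rintro ⟨v, hv⟩
    rcases hv with rfl | ⟨hg, hpy, _, _⟩
    · exact Or.inl rfl
    · exact Or.inr ⟨hg, hpy⟩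
  · rintro (rfl | ⟨hg, hp⟩)
    · exact ⟨y, Or.inl rfl⟩
    · exact ⟨y, Or.inr ⟨hg, hp, hp, Or.inl rfl⟩⟩

lemma MII_R_refl {x : Val Γ} (hx : Good ex Γ x) {y : Val Γ} (hp : PII ex Γ x y) :
    (MII ex Γ hax).R x y y := Or.inr ⟨hx, hp, hp, Or.inl rfl⟩

lemma MII_lt_of_CC {x : Val Γ} (hx : Good ex Γ x) {a b : Val Γ}
    (hpa : PII ex Γ x a) (hpb : PII ex Γ x b) (hne : a ≠ b)
    (hcc : CC Γ (extT ex Γ x) {a, b} = {a}) :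
    (MII ex Γ hax).lt x a b := by
  refine ⟨Or.inr ⟨hx, hpa, hpb, Or.inr hcc⟩, ?_⟩
  rintro (rfl | ⟨_, _, _, h⟩)
  · exact hpb.2 rfl
  rcases h with rfl | hba
  · exact hne rfl
  · rw [Finset.pair_comm] at hba
    rw [hba] at hcc
    exact hne (Finset.singleton_injective hcc).symm

lemma MII_totalOrd : (MII ex Γ hax).totalOrd := by
  intro w u v hu hv hne
  rcases (MII_inW ex Γ hax w u).1 hu with hueq | ⟨hg, hpu⟩
  · have hvw : v ≠ w := by
      rw [← hueq]; exact hne.symm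
    rw [hueq]
    exact Or.inl (lt_center w v hvw)
  rcases (MII_inW ex Γ hax w v).1 hv with hveq | ⟨_, hpv⟩
  · have huw : u ≠ w := by
      rw [← hveq]; exact hne
    rw [hveq]
    exact Or.inr (lt_center w u huw)
  rcases CC_pair_total (extT_mcs hg) hax (b := v) hpu.1 with h | h
  · exact Or.inl (MII_lt_of_CC ex Γ hax hg hpu hpv hne h)
  · rw [Finset.pair_comm] at h
    exact Or.inr (MII_lt_of_CC ex Γ hax hg hpv hpu hne.symm h)

variable {ex Γ}

lemma MII_inW_good {x : Val Γ} (hx : Good ex Γ x) {y : Val Γ}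
    (hy : (MII ex Γ hax).inW x y) : Good ex Γ y := by
  rcases (MII_inW ex Γ hax x y).1 hy with rfl | ⟨_, hp⟩
  · exact hx
  · exact good_of_CC (extT_mcs hx) hp.1

lemma MII_closest_a {x : Val Γ} (hx : Good ex Γ x) {D : Finset (Val Γ)} (hxD : x ∉ D)
    {y : Val Γ} (hy : y ∈ (MII ex Γ hax).closest x (fun y => y ∈ D)) :
    y ∈ CC Γ (extT ex Γ x) D := by
  classical
  obtain ⟨hyW, hyD, hmin⟩ := hy
  have hT := extT_mcs hx
  by_contra hc
  have hyx : y ≠ x := by rintro rfl; exact hxD hyD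
  have hPy : PII ex Γ x y := by
    rcases (MII_inW ex Γ hax x y).1 hyW with rfl | ⟨_, hp⟩
    · exact absurd rfl hyx
    · exact hp
  have hyposs : y ∈ CC Γ (extT ex Γ x) {y} := hPy.1
  have hDne : (CC Γ (extT ex Γ x) D).Nonempty := by
    by_contra hne
    rw [Finset.not_nonempty_iff_eq_empty] at hne
    have he : CC Γ (extT ex Γ x) {y} = ∅ := by
      refine CC_empty_mono hT ?_ hne
      intro z hz
      rw [Finset.mem_singleton] at hz
      rw [hz]
      exact hyD
    rw [he] at hyposs
    exact Finset.notMem_empty _ hyposs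
  obtain ⟨m, hm⟩ := hDne
  have hmy : m ≠ y := by rintro rfl; exact hc hm
  have hmD : m ∈ D := CC_subset hT hm
  have hpairD : ({m, y} : Finset (Val Γ)) ⊆ D := by
    intro z hz
    simp only [Finset.mem_insert, Finset.mem_singleton] at hz
    rcases hz with rfl | rfl
    · exact hmD
    · exact hyD
  have hmpair : m ∈ CC Γ (extT ex Γ x) {m, y} :=
    CC_min hT hpairD hm (Finset.mem_insert_self _ _)
  have hccmy : CC Γ (extT ex Γ x) {m, y} = {m} := by
    ext z
    rw [Finset.mem_singleton]
    constructor
    · intro hz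
      exact CC_singleton_of_A7 hT hax hz hmpair
    · rintro rfl
      exact hmpair
  have hPm : PII ex Γ x m := by
    refine ⟨CC_min hT (by intro z hz; rw [Finset.mem_singleton] at hz; rw [hz]; exact hmD)
      hm (Finset.mem_singleton_self m), ?_⟩
    rintro rfl
    exact hxD hmD
  have hlt : (MII ex Γ hax).lt x m y := MII_lt_of_CC ex Γ hax hx hPm hPy hmy hccmy
  exact hmin m hmD hlt

lemma MII_closest_b {x : Val Γ} (hx : Good ex Γ x) {D : Finset (Val Γ)} (hxD : x ∉ D)
    {g : Val Γ} (hg : g ∈ CC Γ (extT ex Γ x) D) :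
    g ∈ (MII ex Γ hax).closest x (fun y => y ∈ D) := by
  classical
  have hT := extT_mcs hx
  have hgD : g ∈ D := CC_subset hT hg
  have hgx : g ≠ x := by rintro rfl; exact hxD hgD
  have hPg : PII ex Γ x g := by
    refine ⟨CC_min hT (by intro z hz; rw [Finset.mem_singleton] at hz; rw [hz]; exact hgD)
      hg (Finset.mem_singleton_self g), hgx⟩
  refine ⟨(MII_inW ex Γ hax x g).2 (Or.inr ⟨hx, hPg⟩), hgD, ?_⟩
  intro v' hv' hlt
  have hRvg := hlt.1
  rcases hRvg with rfl | ⟨_, hPv', _, h⟩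
  · exact hxD hv'
  have hveq : v' = g := by
    rcases h with rfl | hcc
    · rfl
    · have hsub : ({v', g} : Finset (Val Γ)) ⊆ D := by
        intro z hz
        simp only [Finset.mem_insert, Finset.mem_singleton] at hz
        rcases hz with rfl | rfl
        · exact hv'
        · exact hgD
      have : g ∈ CC Γ (extT ex Γ x) {v', g} :=
        CC_min hT hsub hg (by simp)
      rw [hcc, Finset.mem_singleton] at this
      exact this.symm
  rw [hveq] at hlt
  exact hlt.2 (MII_R_refl ex Γ hax hx hPg)

lemma MII_closest_key {x : Val Γ} (hx : Good ex Γ x) (D : Finset (Val Γ))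
    (P : Val Γ → Prop) :
    (∀ y ∈ (MII ex Γ hax).closest x (fun y => y ∈ D), P y) ↔
      (∀ g ∈ CC Γ (extT ex Γ x) D, P g) := by
  by_cases hxD : x ∈ D
  · rw [closest_center (M := MII ex Γ hax) x (fun y => y ∈ D) hxD]
    have hgof : gOf Γ (extT ex Γ x) ∈ D := by rw [extT_gOf hx]; exact hxD
    have hC := CC_center (extT_mcs hx) hgof
    rw [extT_gOf hx] at hC
    rw [hC]
    constructor
    · intro h g hg
      rw [Finset.mem_singleton] at hg
      rw [hg]
      exact h x rfl
    · intro h y hy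
      rw [Set.mem_singleton_iff] at hy
      rw [hy]
      exact h x (Finset.mem_singleton_self x)
  · constructor
    · intro h g hg
      exact h g (MII_closest_b hax hx hxD hg)
    · intro h y hy
      exact h y (MII_closest_a hax hx hxD hy)

/-- Truth lemma for the AX⁺ canonical model. -/
theorem MII_truth (hsub : SubCl Γ) :
    ∀ (ψ : CForm Φ) (hψ : ψ ∈ Γ) (x : Val Γ), Good ex Γ x →
      ((MII ex Γ hax).satC x ψ ↔ x ⟨ψ, hψ⟩ = true) := by
  intro ψ
  induction ψ with
  | atom p =>
    intro hψ x hx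
    exact ⟨fun ⟨h, hc⟩ => hc, fun hc => ⟨hψ, hc⟩⟩
  | fls =>
    intro hψ x hx
    rw [satC_fls, good_coord hx hψ]
    simp only [false_iff]
    exact fun h => mcs_fls_not_mem (extT_mcs hx) h
  | neg φ ih =>
    intro hψ x hx
    have hφ : φ ∈ Γ := hsub.2.1 φ hψ
    rw [satC_neg, ih hφ x hx, good_coord hx hψ, good_coord hx hφ]
    exact (mcs_neg_mem_iff (extT_mcs hx) φ).symm
  | and φ χ ih1 ih2 =>
    intro hψ x hx
    obtain ⟨hφ, hχ⟩ := hsub.1 φ χ hψ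
    rw [satC_and, ih1 hφ x hx, ih2 hχ x hx, good_coord hx hψ, good_coord hx hφ,
      good_coord hx hχ]
    exact (mcs_and_iff (extT_mcs hx) φ χ).symm
  | cf α β ih1 ih2 =>
    intro hψ x hx
    obtain ⟨hα, hβ⟩ := hsub.2.2 α β hψ
    have hT : MCS ex (extT ex Γ x) := extT_mcs hx
    set D : Finset (Val Γ) := Finset.univ.filter (fun g => g ⟨α, hα⟩ = true) with hD
    have hmemD : ∀ g : Val Γ, g ∈ D ↔ g ⟨α, hα⟩ = true := by
      intro g; simp [hD]
    have hcl : (MII ex Γ hax).closest x (fun y => (MII ex Γ hax).satC y α)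
        = (MII ex Γ hax).closest x (fun y => y ∈ D) := by
      refine closest_congr (M := MII ex Γ hax) x ?_
      intro y hy
      rw [ih1 hα y (MII_inW_good hax hx hy), hmemD]
    rw [satC_cf, hcl]
    have key := MII_closest_key hax hx D (fun g => (MII ex Γ hax).satC g β)
    rw [key]
    have step2 : (∀ g ∈ CC Γ (extT ex Γ x) D, (MII ex Γ hax).satC g β) ↔
        (∀ g ∈ CC Γ (extT ex Γ x) D, g ⟨β, hβ⟩ = true) := by
      constructor
      · intro h g hg
        exact (ih2 hβ g (good_of_CC hT hg)).1 (h g hg)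
      · intro h g hg
        exact (ih2 hβ g (good_of_CC hT hg)).2 (h g hg)
    rw [step2]
    have step3 : (∀ g ∈ CC Γ (extT ex Γ x) D, g ⟨β, hβ⟩ = true) ↔
        CForm.cf (fA Γ D) β ∈ extT ex Γ x := by
      constructor
      · intro h
        refine cf_mem_of_forall hT ?_
        intro g hg v hv
        rw [evalB_hatg] at hv
        have hgb := h g hg
        rw [hv] at hgb
        exact (pat_true_iff Γ v ⟨β, hβ⟩).1 hgb
      · intro h g hg
        by_contra hc
        refine cf_mem_excl hT h hg ?_
        intro v hv
        rw [evalB_hatg]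
        intro hgv
        rw [hgv] at hc
        exact hc ((pat_true_iff Γ v ⟨β, hβ⟩).2 hv)
    rw [step3]
    have step4 : (CForm.cf (fA Γ D) β ∈ extT ex Γ x ↔ CForm.cf α β ∈ extT ex Γ x) := by
      refine (cf_transfer hT ?_).symm
      intro v
      rw [evalB_fA, hmemD, pat_true_iff]
    rw [step4, good_coord hx hψ]

end ModelII


/-! ### The canonical model for AX (preorders) -/

noncomputable section ModelI

open Classical

variable (ex : CForm Φ → Prop) (Γ : Finset (CForm Φ))

/-- Worlds : base copies of valuations plus "states" (guard set, valuation). -/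
abbrev WI := Val Γ ⊕ (Finset (Val Γ) × Val Γ)

def vOfI : WI Γ → Val Γ := Sum.elim id Prod.snd

variable {Γ}

lemma vOfI_inr (σ : Finset (Val Γ) × Val Γ) : vOfI Γ (Sum.inr σ) = σ.2 := rfl

variable (Γ)

/-- Valid states for a center `x`. -/
def SI (x y : WI Γ) : Prop :=
  (∃ σ : Finset (Val Γ) × Val Γ, y = Sum.inr σ ∧
    σ.2 ∈ CC Γ (extT ex Γ (vOfI Γ x)) σ.1) ∧ y ≠ x

/-- The strict order on states. -/
def ltPI (σ τ : Finset (Val Γ) × Val Γ) : Prop := τ.1 ⊂ σ.1 ∧ σ.2 ∉ τ.1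

def RI (x a b : WI Γ) : Prop :=
  a = x ∨ (Good ex Γ (vOfI Γ x) ∧ SI ex Γ x a ∧ SI ex Γ x b ∧
    (a = b ∨ ∃ σ τ, a = Sum.inr σ ∧ b = Sum.inr τ ∧ ltPI Γ σ τ))

@[reducible] def MI : CStruct Φ where
  World := WI Γ
  worldFin := inferInstance
  val := fun w p => ∃ h : CForm.atom p ∈ Γ, vOfI Γ w ⟨CForm.atom p, h⟩ = true
  R := RI ex Γ
  self_mem := fun w => ⟨w, Or.inl rfl⟩
  refl_on := by
    rintro w u ⟨v, hv⟩
    rcases hv with rfl | ⟨hg, hpu, hpv, _⟩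
    · exact Or.inl rfl
    · exact Or.inr ⟨hg, hpu, hpu, Or.inl rfl⟩
  trans_on := by
    rintro w u v z _ _ _ h1 h2
    rcases h1 with rfl | ⟨hg, hpu, hpv, h⟩
    · exact Or.inl rfl
    rcases h2 with rfl | ⟨_, _, hpz, h'⟩
    · exact absurd rfl hpv.2
    refine Or.inr ⟨hg, hpu, hpz, ?_⟩
    rcases h with rfl | ⟨σ, τ, rfl, hbv, hστ⟩
    · exact h'
    rcases h' with rfl | ⟨τ', ρ, hbv', rfl, hτρ⟩
    · exact Or.inr ⟨σ, τ, rfl, hbv, hστ⟩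
    have hττ' : τ = τ' := by
      rw [hbv] at hbv'
      exact Sum.inr.inj hbv'
    rw [← hττ'] at hτρ
    refine Or.inr ⟨σ, ρ, rfl, rfl, ?_, ?_⟩
    · exact hτρ.1.trans hστ.1
    · intro hmem
      exact hστ.2 (hτρ.1.1 hmem)
  centered := by
    intro w u hu
    refine ⟨Or.inl rfl, ?_⟩
    rintro (rfl | ⟨_, _, hpw, _⟩)
    · exact hu rfl
    · exact hpw.2 rfl

lemma MI_inW (x y : WI Γ) :
    (MI ex Γ).inW x y ↔ (y = x ∨ (Good ex Γ (vOfI Γ x) ∧ SI ex Γ x y)) := by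
  constructor
  · rintro ⟨v, hv⟩
    rcases hv with rfl | ⟨hg, hpy, _, _⟩
    · exact Or.inl rfl
    · exact Or.inr ⟨hg, hpy⟩
  · rintro (rfl | ⟨hg, hp⟩)
    · exact ⟨y, Or.inl rfl⟩
    · exact ⟨y, Or.inr ⟨hg, hp, hp, Or.inl rfl⟩⟩

lemma MI_R_refl {x : WI Γ} (hx : Good ex Γ (vOfI Γ x)) {y : WI Γ} (hp : SI ex Γ x y) :
    (MI ex Γ).R x y y := Or.inr ⟨hx, hp, hp, Or.inl rfl⟩

lemma MI_lt_of_ltP {x : WI Γ} (hx : Good ex Γ (vOfI Γ x))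
    {σ τ : Finset (Val Γ) × Val Γ}
    (hpa : SI ex Γ x (Sum.inr σ)) (hpb : SI ex Γ x (Sum.inr τ))
    (hlt : ltPI Γ σ τ) :
    (MI ex Γ).lt x (Sum.inr σ) (Sum.inr τ) := by
  refine ⟨Or.inr ⟨hx, hpa, hpb, Or.inr ⟨σ, τ, rfl, rfl, hlt⟩⟩, ?_⟩
  rintro (heq | ⟨_, _, _, h⟩)
  · exact hpb.2 heq
  rcases h with heq | ⟨τ', σ', h1, h2, hlt'⟩
  · have : τ = σ := Sum.inr.inj heq
    rw [this] at hlt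
    exact (ssubset_irrefl σ.1) hlt.1
  · have hτ : τ' = τ := Sum.inr.inj h1.symm
    have hσ : σ' = σ := Sum.inr.inj h2.symm
    rw [hτ, hσ] at hlt'
    exact (ssubset_irrefl σ.1) (hlt'.1.trans hlt.1)

variable {ex Γ}

lemma MI_inW_good {x : WI Γ} (hx : Good ex Γ (vOfI Γ x)) {y : WI Γ}
    (hy : (MI ex Γ).inW x y) : Good ex Γ (vOfI Γ y) := by
  rcases (MI_inW ex Γ x y).1 hy with rfl | ⟨_, hp⟩
  · exact hx
  · obtain ⟨σ, rfl, hσ⟩ := hp.1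
    rw [vOfI_inr]
    exact good_of_CC (extT_mcs hx) hσ

lemma MI_closest_a {x : WI Γ} (hx : Good ex Γ (vOfI Γ x)) {D : Finset (Val Γ)}
    (hxD : vOfI Γ x ∉ D) {y : WI Γ}
    (hy : y ∈ (MI ex Γ).closest x (fun y => vOfI Γ y ∈ D)) :
    vOfI Γ y ∈ CC Γ (extT ex Γ (vOfI Γ x)) D := by
  classical
  obtain ⟨hyW, hyD, hmin⟩ := hy
  have hT := extT_mcs hx
  by_contra hc
  have hyx : y ≠ x := by rintro rfl; exact hxD hyD
  have hPy : SI ex Γ x y := by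
    rcases (MI_inW ex Γ x y).1 hyW with heq | ⟨_, hp⟩
    · exact absurd heq hyx
    · exact hp
  obtain ⟨σ, rfl, hσ⟩ := hPy.1
  rw [vOfI_inr] at hyD hc
  obtain ⟨x', hx'CC, hx'G⟩ := CC_extend hT hσ hyD hc
  have hx'U : x' ∈ σ.1 ∪ D := CC_subset hT hx'CC
  have hx'D : x' ∈ D := by
    rcases Finset.mem_union.1 hx'U with h | h
    · exact absurd h hx'G
    · exact h
  set z : WI Γ := Sum.inr (σ.1 ∪ D, x') with hz
  have hPz : SI ex Γ x z := by
    refine ⟨⟨(σ.1 ∪ D, x'), rfl, hx'CC⟩, ?_⟩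
    intro heq
    rw [hz] at heq
    have : vOfI Γ (Sum.inr ((σ.1 ∪ D, x') : Finset (Val Γ) × Val Γ)) = vOfI Γ x := by
      rw [heq]
    rw [vOfI_inr] at this
    rw [← this] at hxD
    exact hxD hx'D
  have hlt : (MI ex Γ).lt x z (Sum.inr σ) := by
    refine MI_lt_of_ltP ex Γ hx hPz hPy ⟨⟨Finset.subset_union_left, ?_⟩, hx'G⟩
    intro hsub
    exact hx'G (hsub hx'U)
  exact hmin z hx'D hlt

lemma MI_closest_b {x : WI Γ} (hx : Good ex Γ (vOfI Γ x)) {D : Finset (Val Γ)}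
    (hxD : vOfI Γ x ∉ D) {g : Val Γ} (hg : g ∈ CC Γ (extT ex Γ (vOfI Γ x)) D) :
    Sum.inr ((D, g) : Finset (Val Γ) × Val Γ) ∈
      (MI ex Γ).closest x (fun y => vOfI Γ y ∈ D) := by
  classical
  have hT := extT_mcs hx
  have hgD : g ∈ D := CC_subset hT hg
  have hne : Sum.inr ((D, g) : Finset (Val Γ) × Val Γ) ≠ x := by
    intro heq
    have : vOfI Γ (Sum.inr ((D, g) : Finset (Val Γ) × Val Γ)) = vOfI Γ x := by rw [heq]
    rw [vOfI_inr] at this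
    rw [← this] at hxD
    exact hxD hgD
  have hPg : SI ex Γ x (Sum.inr ((D, g) : Finset (Val Γ) × Val Γ)) :=
    ⟨⟨(D, g), rfl, hg⟩, hne⟩
  refine ⟨(MI_inW ex Γ x _).2 (Or.inr ⟨hx, hPg⟩), hgD, ?_⟩
  intro v' hv' hlt
  rcases hlt.1 with heq | ⟨_, hPv', _, h⟩
  · rw [heq] at hv'
    exact hxD hv'
  rcases h with heq | ⟨σ, τ, hveq, hyeq, hltP⟩
  · rw [heq] at hlt
    exact hlt.2 (MI_R_refl ex Γ hx hPg)
  · have hτ : τ = (D, g) := Sum.inr.inj hyeq.symm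
    rw [hτ] at hltP
    rw [hveq, vOfI_inr] at hv'
    exact hltP.2 hv'

lemma MI_closest_key {x : WI Γ} (hx : Good ex Γ (vOfI Γ x)) (D : Finset (Val Γ))
    (P : Val Γ → Prop) :
    (∀ y ∈ (MI ex Γ).closest x (fun y => vOfI Γ y ∈ D), P (vOfI Γ y)) ↔
      (∀ g ∈ CC Γ (extT ex Γ (vOfI Γ x)) D, P g) := by
  by_cases hxD : vOfI Γ x ∈ D
  · rw [closest_center (M := MI ex Γ) x (fun y => vOfI Γ y ∈ D) hxD]
    have hgof : gOf Γ (extT ex Γ (vOfI Γ x)) ∈ D := by rw [extT_gOf hx]; exact hxD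
    have hC := CC_center (extT_mcs hx) hgof
    rw [extT_gOf hx] at hC
    rw [hC]
    constructor
    · intro h g hg
      rw [Finset.mem_singleton] at hg
      rw [hg]
      exact h x rfl
    · intro h y hy
      rw [Set.mem_singleton_iff] at hy
      rw [hy]
      exact h (vOfI Γ x) (Finset.mem_singleton_self _)
  · constructor
    · intro h g hg
      have := h _ (MI_closest_b hx hxD hg)
      rw [vOfI_inr] at this
      exact this
    · intro h y hy
      exact h _ (MI_closest_a hx hxD hy)

/-- Truth lemma for the AX canonical model. -/
theorem MI_truth (hsub : SubCl Γ) :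
    ∀ (ψ : CForm Φ) (hψ : ψ ∈ Γ) (x : WI Γ), Good ex Γ (vOfI Γ x) →
      ((MI ex Γ).satC x ψ ↔ vOfI Γ x ⟨ψ, hψ⟩ = true) := by
  intro ψ
  induction ψ with
  | atom p =>
    intro hψ x hx
    exact ⟨fun ⟨h, hc⟩ => hc, fun hc => ⟨hψ, hc⟩⟩
  | fls =>
    intro hψ x hx
    rw [satC_fls, good_coord hx hψ]
    simp only [false_iff]
    exact fun h => mcs_fls_not_mem (extT_mcs hx) h
  | neg φ ih =>
    intro hψ x hx
    have hφ : φ ∈ Γ := hsub.2.1 φ hψ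
    rw [satC_neg, ih hφ x hx, good_coord hx hψ, good_coord hx hφ]
    exact (mcs_neg_mem_iff (extT_mcs hx) φ).symm
  | and φ χ ih1 ih2 =>
    intro hψ x hx
    obtain ⟨hφ, hχ⟩ := hsub.1 φ χ hψ
    rw [satC_and, ih1 hφ x hx, ih2 hχ x hx, good_coord hx hψ, good_coord hx hφ,
      good_coord hx hχ]
    exact (mcs_and_iff (extT_mcs hx) φ χ).symm
  | cf α β ih1 ih2 =>
    intro hψ x hx
    obtain ⟨hα, hβ⟩ := hsub.2.2 α β hψ
    have hT : MCS ex (extT ex Γ (vOfI Γ x)) := extT_mcs hx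
    set D : Finset (Val Γ) := Finset.univ.filter (fun g => g ⟨α, hα⟩ = true) with hD
    have hmemD : ∀ g : Val Γ, g ∈ D ↔ g ⟨α, hα⟩ = true := by
      intro g; simp [hD]
    have hcl : (MI ex Γ).closest x (fun y => (MI ex Γ).satC y α)
        = (MI ex Γ).closest x (fun y => vOfI Γ y ∈ D) := by
      refine closest_congr (M := MI ex Γ) x ?_
      intro y hy
      rw [ih1 hα y (MI_inW_good hx hy), hmemD]
    rw [satC_cf, hcl]
    have step1 : (∀ y ∈ (MI ex Γ).closest x (fun y => vOfI Γ y ∈ D), (MI ex Γ).satC y β) ↔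
        (∀ y ∈ (MI ex Γ).closest x (fun y => vOfI Γ y ∈ D), vOfI Γ y ⟨β, hβ⟩ = true) := by
      constructor
      · intro h y hy
        exact (ih2 hβ y (MI_inW_good hx hy.1)).1 (h y hy)
      · intro h y hy
        exact (ih2 hβ y (MI_inW_good hx hy.1)).2 (h y hy)
    rw [step1]
    have key := MI_closest_key hx D (fun g => g ⟨β, hβ⟩ = true)
    rw [key]
    have step3 : (∀ g ∈ CC Γ (extT ex Γ (vOfI Γ x)) D, g ⟨β, hβ⟩ = true) ↔
        CForm.cf (fA Γ D) β ∈ extT ex Γ (vOfI Γ x) := by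
      constructor
      · intro h
        refine cf_mem_of_forall hT ?_
        intro g hg v hv
        rw [evalB_hatg] at hv
        have hgb := h g hg
        rw [hv] at hgb
        exact (pat_true_iff Γ v ⟨β, hβ⟩).1 hgb
      · intro h g hg
        by_contra hc
        refine cf_mem_excl hT h hg ?_
        intro v hv
        rw [evalB_hatg]
        intro hgv
        rw [hgv] at hc
        exact hc ((pat_true_iff Γ v ⟨β, hβ⟩).2 hv)
    rw [step3]
    have step4 : (CForm.cf (fA Γ D) β ∈ extT ex Γ (vOfI Γ x) ↔
        CForm.cf α β ∈ extT ex Γ (vOfI Γ x)) := by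
      refine (cf_transfer hT ?_).symm
      intro v
      rw [evalB_fA, hmemD, pat_true_iff]
    rw [step4, good_coord hx hψ]

end ModelI


/-! ### Subformulas and the final assembly -/

def subf : CForm Φ → List (CForm Φ)
  | CForm.atom p => [CForm.atom p]
  | CForm.fls => [CForm.fls]
  | CForm.neg φ => CForm.neg φ :: subf φ
  | CForm.and φ ψ => CForm.and φ ψ :: (subf φ ++ subf ψ)
  | CForm.cf φ ψ => CForm.cf φ ψ :: (subf φ ++ subf ψ)

lemma subf_self (φ : CForm Φ) : φ ∈ subf φ := by
  cases φ <;> simp [subf]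

lemma subf_trans : ∀ φ ψ : CForm Φ, ψ ∈ subf φ → ∀ χ ∈ subf ψ, χ ∈ subf φ := by
  intro φ
  induction φ with
  | atom p =>
    intro ψ h χ hχ
    simp only [subf, List.mem_singleton] at h
    rw [h] at hχ
    exact hχ
  | fls =>
    intro ψ h χ hχ
    simp only [subf, List.mem_singleton] at h
    rw [h] at hχ
    exact hχ
  | neg φ ih =>
    intro ψ h χ hχ
    rcases List.mem_cons.1 h with rfl | h
    · exact hχ
    · exact List.mem_cons_of_mem _ (ih ψ h χ hχ)
  | and φ φ' ih ih' =>
    intro ψ h χ hχ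
    rcases List.mem_cons.1 h with rfl | h
    · exact hχ
    · rcases List.mem_append.1 h with h | h
      · exact List.mem_cons_of_mem _ (List.mem_append.2 (Or.inl (ih ψ h χ hχ)))
      · exact List.mem_cons_of_mem _ (List.mem_append.2 (Or.inr (ih' ψ h χ hχ)))
  | cf φ φ' ih ih' =>
    intro ψ h χ hχ
    rcases List.mem_cons.1 h with rfl | h
    · exact hχ
    · rcases List.mem_append.1 h with h | h
      · exact List.mem_cons_of_mem _ (List.mem_append.2 (Or.inl (ih ψ h χ hχ)))
      · exact List.mem_cons_of_mem _ (List.mem_append.2 (Or.inr (ih' ψ h χ hχ)))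

open Classical in
noncomputable def GammaOf (φ : CForm Φ) : Finset (CForm Φ) := (subf φ).toFinset

open Classical in
lemma mem_GammaOf {φ ψ : CForm Φ} : ψ ∈ GammaOf φ ↔ ψ ∈ subf φ := List.mem_toFinset

lemma subCl_GammaOf (φ : CForm Φ) : SubCl (GammaOf φ) := by
  refine ⟨?_, ?_, ?_⟩
  · intro a b h
    rw [mem_GammaOf] at h
    constructor
    · exact mem_GammaOf.2 (subf_trans φ _ h a (by simp [subf, subf_self]))
    · exact mem_GammaOf.2 (subf_trans φ _ h b (by simp [subf, subf_self]))
  · intro a h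
    rw [mem_GammaOf] at h
    exact mem_GammaOf.2 (subf_trans φ _ h a (by simp [subf, subf_self]))
  · intro a b h
    rw [mem_GammaOf] at h
    constructor
    · exact mem_GammaOf.2 (subf_trans φ _ h a (by simp [subf, subf_self]))
    · exact mem_GammaOf.2 (subf_trans φ _ h b (by simp [subf, subf_self]))

open Classical in
lemma lits_gOf_mem {ex : CForm Φ → Prop} {Γ : Finset (CForm Φ)} {T : Set (CForm Φ)}
    (hT : MCS ex T) : ∀ χ ∈ lits Γ (gOf Γ T), χ ∈ T := by
  intro χ hχ
  obtain ⟨x, _, rfl⟩ := List.mem_map.1 hχ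
  by_cases hx : x.1 ∈ T
  · rw [lit, gOf, if_pos (by simp [hx])]
    exact hx
  · rw [lit, gOf, if_neg (by simp [hx])]
    exact mcs_neg_closed hT hx

open Classical in
theorem completeness_I {φ : CForm Φ} (h : ¬ AXProv Φ (fun _ => False) φ) :
    ∃ (M : CStruct Φ) (w : M.World), ¬ M.satC w φ := by
  set ex : CForm Φ → Prop := fun _ => False with hex
  set Γ : Finset (CForm Φ) := GammaOf φ with hΓ
  have hsub : SubCl Γ := subCl_GammaOf φ
  have hcon : Con ex {CForm.neg φ} := con_singleton_neg h
  obtain ⟨T₀, hsub0, hT₀⟩ := lindenbaum hcon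
  set g₀ : Val Γ := gOf Γ T₀ with hg₀
  have hgood : Good ex Γ g₀ := ⟨T₀, hT₀, lits_gOf_mem hT₀⟩
  have hφΓ : φ ∈ Γ := mem_GammaOf.2 (subf_self φ)
  refine ⟨MI ex Γ, Sum.inl g₀, ?_⟩
  have htruth := MI_truth (ex := ex) hsub φ hφΓ (Sum.inl g₀) hgood
  rw [htruth]
  have hneg : CForm.neg φ ∈ T₀ := hsub0 rfl
  have hnot : φ ∉ T₀ := fun hmem => mcs_not_both hT₀ hmem hneg
  show ¬ (g₀ ⟨φ, hφΓ⟩ = true)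
  rw [hg₀, gOf, if_neg hnot]
  simp

open Classical in
theorem completeness_II {φ : CForm Φ} (h : ¬ AXProv Φ (A7Scheme Φ) φ) :
    ∃ M : CStruct Φ, M.totalOrd ∧ ∃ w : M.World, ¬ M.satC w φ := by
  set ex : CForm Φ → Prop := A7Scheme Φ with hex
  have hax : ∀ φ' ψ1 ψ2 : CForm Φ, Prv ex (CForm.imp (CForm.cf φ' (CForm.or ψ1 ψ2))
      (CForm.or (CForm.cf φ' ψ1) (CForm.cf φ' ψ2))) :=
    fun φ' ψ1 ψ2 => AXProv.ax ⟨φ', ψ1, ψ2, rfl⟩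
  set Γ : Finset (CForm Φ) := GammaOf φ with hΓ
  have hsub : SubCl Γ := subCl_GammaOf φ
  have hcon : Con ex {CForm.neg φ} := con_singleton_neg h
  obtain ⟨T₀, hsub0, hT₀⟩ := lindenbaum hcon
  set g₀ : Val Γ := gOf Γ T₀ with hg₀
  have hgood : Good ex Γ g₀ := ⟨T₀, hT₀, lits_gOf_mem hT₀⟩
  have hφΓ : φ ∈ Γ := mem_GammaOf.2 (subf_self φ)
  refine ⟨MII ex Γ hax, MII_totalOrd ex Γ hax, g₀, ?_⟩
  have htruth := MII_truth (ex := ex) hax hsub φ hφΓ g₀ hgood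
  rw [htruth]
  have hneg : CForm.neg φ ∈ T₀ := hsub0 rfl
  have hnot : φ ∉ T₀ := fun hmem => mcs_not_both hT₀ hmem hneg
  show ¬ (g₀ ⟨φ, hφΓ⟩ = true)
  rw [hg₀, gOf, if_neg hnot]
  simp

end Stmt19

/-- For every finite set `Φ` of primitive propositions, (i) AX is
sound and complete for `L^C(Φ)` with respect to the class `M(Φ)` of all
counterfactual structures over `Φ`, and (ii) AX⁺ (AX together with A7) is sound
and complete for `L^C(Φ)` with respect to the class `M⁺(Φ)` of structures in
which each `≺_w` is a strict total order on `W_w`. -/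
theorem stmt19 (Φ : Type) (hΦ : Fintype Φ) :
    (∀ φ : CForm Φ,
      AXProv Φ (fun _ => False) φ ↔ ∀ (M : CStruct Φ) (w : M.World), M.satC w φ) ∧
    (∀ φ : CForm Φ,
      AXProv Φ (A7Scheme Φ) φ ↔
        ∀ M : CStruct Φ, M.totalOrd → ∀ w : M.World, M.satC w φ) := by
  constructor
  · intro φ
    constructor
    · intro h M w
      exact Stmt19.soundness (Set.univ) (fun M _ w θ hθ => hθ.elim) h M (Set.mem_univ M) w
    · intro hval
      by_contra h
      obtain ⟨M, w, hw⟩ := Stmt19.completeness_I h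
      exact hw (hval M w)
  · intro φ
    constructor
    · intro h M hM w
      exact Stmt19.soundness {M : CStruct Φ | M.totalOrd}
        (fun M hM w θ hθ => Stmt19.soundness_A7 M hM w θ hθ) h M hM w
    · intro hval
      by_contra h
      obtain ⟨M, hM, w, hw⟩ := Stmt19.completeness_II h
      exact hw (hval M hM w)
end
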